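/- arXiv:2604.20106 — 9 statements merged into one kernel-verified Lean document; each statement's English description precedes it below -/
import Mathlib

section
/- Let S be an HL semigroup. For every finite coloring of S and every ε > 0, there exist a, b ∈ S with 0 < a < ε, 0 < b < ε, a·b ∈ S and b·(a+1) ∈ S, such that the four elements a, b, a·b and b·(a+1) all receive the same color. (Goswami's theorem near zero; Theorem 3.6.) -/
/-- A set `S ⊆ ℝ` is an HL semigroup: `S ⊆ (0,∞)`, `S` is dense in `(0,∞)`,
`S` is closed under addition, `S ∩ (0,1)` is closed under multiplication, and
for every `y ∈ S ∩ (0,1)` and every `x ∈ S`, both `x/y ∈ S` and `y·x ∈ S`. -/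
def IsHL (S : Set ℝ) : Prop :=
  (∀ x ∈ S, (0:ℝ) < x) ∧
  (Set.Ioi (0:ℝ) ⊆ closure S) ∧
  (∀ x ∈ S, ∀ y ∈ S, x + y ∈ S) ∧
  (∀ x ∈ S, ∀ y ∈ S, x < 1 → y < 1 → x * y ∈ S) ∧
  (∀ y ∈ S, y < 1 → ∀ x ∈ S, x / y ∈ S ∧ y * x ∈ S)

open Filter

section Gos

attribute [local instance] Ultrafilter.mul Ultrafilter.semigroup

local instance : Mul (Finset ℕ) := ⟨(· ∪ ·)⟩
local instance : Semigroup (Finset ℕ) := { mul_assoc := fun a b c => Finset.union_assoc a b c }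

lemma ultra_color {α κ : Type*} [Finite κ] (U : Ultrafilter α) (f : α → κ) :
    ∃ j, {x | f x = j} ∈ U := by
  by_contra h
  push_neg at h
  have h' : ∀ j : κ, {x : α | f x ≠ j} ∈ U := by
    intro j
    have := Ultrafilter.compl_mem_iff_notMem.mpr (h j)
    simpa [Set.compl_setOf] using this
  have hmem : (⋂ j, {x : α | f x ≠ j}) ∈ U := (Filter.iInter_mem).mpr h'
  obtain ⟨x, hx⟩ := Ultrafilter.nonempty_of_mem hmem
  exact (Set.mem_iInter.mp hx (f x)) rfl

lemma exists_special_ultrafilter :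
    ∃ U : Ultrafilter (Finset ℕ), U * U = U ∧
      ∀ n : ℕ, {F : Finset ℕ | F.Nonempty ∧ ∀ i ∈ F, n < i} ∈ U := by
  set B : ℕ → Set (Finset ℕ) := fun n => {F | F.Nonempty ∧ ∀ i ∈ F, n < i} with hB
  have hBanti : ∀ {m n : ℕ}, m ≤ n → B n ⊆ B m := by
    intro m n h F hF
    exact ⟨hF.1, fun i hi => lt_of_le_of_lt h (hF.2 i hi)⟩
  have hBne : ∀ n, (B n).Nonempty := by
    intro n
    refine ⟨{n+1}, ⟨n+1, Finset.mem_singleton_self _⟩, ?_⟩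
    intro i hi
    rw [Finset.mem_singleton] at hi
    omega
  have hdir : Directed (· ≥ ·) fun n => (𝓟 (B n) : Filter (Finset ℕ)) := by
    intro m n
    exact ⟨max m n, principal_mono.2 (hBanti (le_max_left _ _)),
      principal_mono.2 (hBanti (le_max_right _ _))⟩
  haveI hnb : ∀ n, NeBot (𝓟 (B n) : Filter (Finset ℕ)) :=
    fun n => principal_neBot_iff.mpr (hBne n)
  haveI hne : NeBot (⨅ n, 𝓟 (B n) : Filter (Finset ℕ)) := iInf_neBot_of_directed hdir hnb
  set U₀ := Ultrafilter.of (⨅ n, 𝓟 (B n)) with hU₀def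
  have hU₀ : ∀ n, B n ∈ U₀ :=
    fun n => (Ultrafilter.of_le _) (mem_iInf_of_mem n (mem_principal_self _))
  set C : Set (Ultrafilter (Finset ℕ)) := ⋂ n, {U | B n ∈ U} with hC
  obtain ⟨U, hU, hidem⟩ := exists_idempotent_in_compact_subsemigroup
    Ultrafilter.continuous_mul_left C ⟨U₀, Set.mem_iInter.mpr hU₀⟩
    (IsClosed.isCompact (isClosed_iInter fun n => ultrafilter_isClosed_basic _))
    (by
      intro U hU V hV
      rw [Set.mem_iInter] at hU hV ⊢
      intro n
      have hev : ∀ᶠ F in (U : Filter (Finset ℕ)), ∀ᶠ G in (V : Filter (Finset ℕ)),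
          F * G ∈ B n := by
        filter_upwards [hU n] with F hF
        filter_upwards [hV n] with G hG
        obtain ⟨x, hx⟩ := hF.1
        exact ⟨⟨x, Finset.mem_union_left _ hx⟩, fun i hi =>
          (Finset.mem_union.mp hi).elim (hF.2 i) (hG.2 i)⟩
      exact (Ultrafilter.eventually_mul U V _).mpr hev)
  exact ⟨U, hidem, fun n => Set.mem_iInter.mp hU n⟩

lemma sum_bound (y : ℕ → ℝ) (hpos : ∀ n, 0 < y n) (hdec : ∀ n, 4 * y (n + 1) ≤ y n) :
    ∀ (F : Finset ℕ) (m : ℕ), (∀ i ∈ F, m ≤ i) → (∑ i ∈ F, y i) ≤ 2 * y m := by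
  have hanti : Antitone y := antitone_nat_of_succ_le (fun n => by nlinarith [hpos (n+1), hdec n])
  intro F
  induction F using Finset.strongInduction with
  | _ F ih =>
    intro m hm
    rcases F.eq_empty_or_nonempty with rfl | hF
    · simp
      nlinarith [hpos m]
    · set k := F.min' hF with hk
      have hkF : k ∈ F := F.min'_mem hF
      have hmk : m ≤ k := hm k hkF
      have hsub : F.erase k ⊂ F := Finset.erase_ssubset hkF
      have hge : ∀ i ∈ F.erase k, k + 1 ≤ i := by
        intro i hi
        have hiF := Finset.mem_of_mem_erase hi
        have hik : i ≠ k := Finset.ne_of_mem_erase hi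
        have := F.min'_le i hiF
        omega
      have h1 := ih (F.erase k) hsub (k + 1) hge
      have h2 : (∑ i ∈ F, y i) = y k + ∑ i ∈ F.erase k, y i :=
        (Finset.add_sum_erase F y hkF).symm
      have h3 : y k ≤ y m := hanti hmk
      have h4 := hdec k
      linarith [hpos k]

lemma exists_fast_seq {S : Set ℝ}
    (hpick : ∀ δ : ℝ, 0 < δ → ∃ x, x ∈ S ∧ 0 < x ∧ x < δ) (r : ℝ) (hr : 0 < r) :
    ∃ y : ℕ → ℝ, (∀ n, y n ∈ S) ∧ (∀ n, 0 < y n) ∧ y 0 < r ∧ ∀ n, y (n + 1) < r * y n := by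
  choose f hfS hfpos hflt using hpick
  let g : {x : ℝ // x ∈ S ∧ 0 < x} → {x : ℝ // x ∈ S ∧ 0 < x} := fun p =>
    ⟨f (r * p.1) (mul_pos hr p.2.2), hfS _ _, hfpos _ _⟩
  let Y : ℕ → {x : ℝ // x ∈ S ∧ 0 < x} := fun n => g^[n] ⟨f r hr, hfS r hr, hfpos r hr⟩
  refine ⟨fun n => (Y n).1, fun n => (Y n).2.1, fun n => (Y n).2.2, hflt r hr, fun n => ?_⟩
  show (Y (n + 1)).1 < r * (Y n).1
  have hYs : Y (n + 1) = g (Y n) := Function.iterate_succ_apply' g n _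
  rw [hYs]
  exact hflt _ _

/-- Goswami's theorem near zero (Theorem 3.6). -/
theorem goswami_near_zero (S : Set ℝ) (hS : IsHL S) (κ : Type*) [Finite κ]
    (c : {x : ℝ // x ∈ S} → κ) (ε : ℝ) (hε : 0 < ε) :
    ∃ (a b : ℝ) (ha : a ∈ S) (hb : b ∈ S) (hab : a * b ∈ S) (hba : b * (a + 1) ∈ S),
      0 < a ∧ a < ε ∧ 0 < b ∧ b < ε ∧
      c ⟨a, ha⟩ = c ⟨b, hb⟩ ∧ c ⟨a, ha⟩ = c ⟨a * b, hab⟩ ∧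
      c ⟨a, ha⟩ = c ⟨b * (a + 1), hba⟩ := by
  classical
  obtain ⟨hpos, hdense, hadd, hmul, hquot⟩ := hS
  set ε' := min ε 1 with hε'def
  have hε' : 0 < ε' := lt_min hε one_pos
  have hε'le1 : ε' ≤ 1 := min_le_right _ _
  have hε'leε : ε' ≤ ε := min_le_left _ _
  -- density pick
  have hpick : ∀ δ : ℝ, 0 < δ → ∃ x, x ∈ S ∧ 0 < x ∧ x < δ := by
    intro δ hδ
    have hmem : δ / 2 ∈ closure S := hdense (by simpa using half_pos hδ)
    rcases mem_closure_iff.mp hmem (Set.Ioo 0 δ) isOpen_Ioo ⟨half_pos hδ, half_lt_self hδ⟩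
      with ⟨x, hxI, hxS⟩
    exact ⟨x, hxS, hxI.1, hxI.2⟩
  obtain ⟨y, hyS, hypos, hy0, hystep⟩ := exists_fast_seq hpick (ε' / 4) (by positivity)
  have hdec4 : ∀ n, 4 * y (n + 1) ≤ y n := by
    intro n
    have := hystep n
    nlinarith [hypos n, hypos (n+1)]
  -- block sums
  set σ : Finset ℕ → ℝ := fun F => ∑ i ∈ F, y i with hσdef
  have hσS : ∀ F : Finset ℕ, F.Nonempty → σ F ∈ S := by
    intro F hF
    induction hF using Finset.Nonempty.cons_induction with
    | singleton a => simpa [hσdef] using hyS a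
    | cons a s ha hs ih =>
      have : σ (Finset.cons a s ha) = y a + σ s := Finset.sum_cons ha
      rw [this]
      exact hadd _ (hyS a) _ ih
  have hσpos : ∀ F : Finset ℕ, F.Nonempty → 0 < σ F :=
    fun F hF => Finset.sum_pos (fun i _ => hypos i) hF
  have hσle : ∀ (F : Finset ℕ) (m : ℕ), (∀ i ∈ F, m ≤ i) → σ F ≤ 2 * y m :=
    sum_bound y hypos hdec4
  have hσlt1 : ∀ F : Finset ℕ, σ F < 1 := by
    intro F
    have h1 : σ F ≤ 2 * y 0 := hσle F 0 (fun i _ => Nat.zero_le i)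
    nlinarith [hy0, hε'le1]
  -- the pair coloring
  have hj0 : κ := c ⟨y 0, hyS 0⟩
  set χ : Finset ℕ → Finset ℕ → κ := fun F G =>
    if h : σ G / σ F ∈ S then c ⟨σ G / σ F, h⟩ else hj0 with hχdef
  obtain ⟨U, hUidem, hUB⟩ := exists_special_ultrafilter
  have hex : ∀ F : Finset ℕ, ∃ j, {G | χ F G = j} ∈ U := fun F => ultra_color U (χ F)
  choose jm hjm using hex
  obtain ⟨jstar, hjstar⟩ := ultra_color U jm
  -- pick F₁
  obtain ⟨F₁, hF₁W, hF₁ne, -⟩ :=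
    Ultrafilter.nonempty_of_mem (inter_mem hjstar (hUB 0))
  -- the diagonal set from idempotency
  have hS₂ : {F | ∀ᶠ G in (U : Filter (Finset ℕ)), χ F₁ (F * G) = jm F₁} ∈ U := by
    have h2 : ∀ᶠ m in ((U * U : Ultrafilter (Finset ℕ)) : Filter (Finset ℕ)),
        χ F₁ m = jm F₁ := by
      rw [hUidem]
      exact hjm F₁
    exact (Ultrafilter.eventually_mul U U _).mp h2
  -- pick F₂
  obtain ⟨F₂, hF₂W, hF₂Z1, hF₂S₂, hF₂ne, hF₂gt⟩ :=
    Ultrafilter.nonempty_of_mem (inter_mem hjstar (inter_mem (hjm F₁)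
      (inter_mem hS₂ (hUB (F₁.max' hF₁ne)))))
  -- pick F₃
  obtain ⟨F₃, hF₃Z2, hF₃Z1, hF₃Z1', hF₃ne, hF₃gt⟩ :=
    Ultrafilter.nonempty_of_mem (inter_mem (hjm F₂) (inter_mem (hjm F₁)
      (inter_mem hF₂S₂ (hUB (F₂.max' hF₂ne)))))
  -- order facts
  have hgt21 : ∀ i ∈ F₂, F₁.max' hF₁ne < i := hF₂gt
  have hgt32 : ∀ i ∈ F₃, F₂.max' hF₂ne < i := hF₃gt
  have hgt31 : ∀ i ∈ F₃, F₁.max' hF₁ne < i := fun i hi =>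
    lt_trans (hgt21 _ (F₂.max'_mem hF₂ne)) (hgt32 i hi)
  have hgt231 : ∀ i ∈ F₂ ∪ F₃, F₁.max' hF₁ne < i := by
    intro i hi
    rcases Finset.mem_union.mp hi with h | h
    · exact hgt21 i h
    · exact hgt31 i h
  have hdisj : Disjoint F₂ F₃ := Finset.disjoint_left.mpr
    (fun {i} hi2 hi3 => absurd (Finset.le_max' F₂ i hi2) (not_le.mpr (hgt32 i hi3)))
  have hne23 : (F₂ ∪ F₃).Nonempty := by
    obtain ⟨x, hx⟩ := hF₂ne
    exact ⟨x, Finset.mem_union_left _ hx⟩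
  -- ratio lemma
  have hratio : ∀ (F G : Finset ℕ) (hF : F.Nonempty), G.Nonempty →
      (∀ i ∈ G, F.max' hF < i) → σ G / σ F ∈ S ∧ 0 < σ G / σ F ∧ σ G / σ F < ε := by
    intro F G hF hG hgt
    have hFpos := hσpos F hF
    have hGpos := hσpos G hG
    have hmem : σ G / σ F ∈ S := (hquot (σ F) (hσS F hF) (hσlt1 F) (σ G) (hσS G hG)).1
    have hGle : σ G ≤ 2 * y (F.max' hF + 1) := hσle G _ (fun i hi => hgt i hi)
    have hstep := hystep (F.max' hF)
    have hyle : y (F.max' hF) ≤ σ F :=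
      Finset.single_le_sum (fun i _ => le_of_lt (hypos i)) (F.max'_mem hF)
    have hGlt : σ G < ε * σ F := by
      have hkey : (ε' / 2) * y (F.max' hF) ≤ (ε' / 2) * σ F :=
        mul_le_mul_of_nonneg_left hyle (by positivity)
      nlinarith [hε', hε'leε, hFpos]
    exact ⟨hmem, div_pos hGpos hFpos, (div_lt_iff₀ hFpos).mpr hGlt⟩
  obtain ⟨ha, hapos, haε⟩ := hratio F₂ F₃ hF₂ne hF₃ne hgt32
  obtain ⟨hb, hbpos, hbε⟩ := hratio F₁ F₂ hF₁ne hF₂ne hgt21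
  obtain ⟨hab', -, -⟩ := hratio F₁ F₃ hF₁ne hF₃ne hgt31
  obtain ⟨hba', -, -⟩ := hratio F₁ (F₂ ∪ F₃) hF₁ne hne23 hgt231
  have h2ne : σ F₂ ≠ 0 := ne_of_gt (hσpos F₂ hF₂ne)
  have h1ne : σ F₁ ≠ 0 := ne_of_gt (hσpos F₁ hF₁ne)
  have hab_eq : σ F₃ / σ F₂ * (σ F₂ / σ F₁) = σ F₃ / σ F₁ := by
    field_simp
  have hσu : σ (F₂ ∪ F₃) = σ F₂ + σ F₃ := Finset.sum_union hdisj
  have hba_eq : σ F₂ / σ F₁ * (σ F₃ / σ F₂ + 1) = σ (F₂ ∪ F₃) / σ F₁ := by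
    rw [hσu]
    field_simp
    ring
  -- color equalities
  have color_of : ∀ (F G : Finset ℕ) (h : σ G / σ F ∈ S), χ F G = c ⟨σ G / σ F, h⟩ :=
    fun F G h => dif_pos h
  have e1 : c ⟨σ F₃ / σ F₂, ha⟩ = jstar := by
    have h := hF₃Z2
    rw [Set.mem_setOf_eq, color_of F₂ F₃ ha] at h
    rw [h]
    exact hF₂W
  have e2 : c ⟨σ F₂ / σ F₁, hb⟩ = jstar := by
    have h := hF₂Z1
    rw [Set.mem_setOf_eq, color_of F₁ F₂ hb] at h
    rw [h]
    exact hF₁W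
  have e3 : c ⟨σ F₃ / σ F₁, hab'⟩ = jstar := by
    have h := hF₃Z1
    rw [Set.mem_setOf_eq, color_of F₁ F₃ hab'] at h
    rw [h]
    exact hF₁W
  have e4 : c ⟨σ (F₂ ∪ F₃) / σ F₁, hba'⟩ = jstar := by
    have h : χ F₁ (F₂ ∪ F₃) = jm F₁ := hF₃Z1'
    rw [color_of F₁ (F₂ ∪ F₃) hba'] at h
    rw [h]
    exact hF₁W
  refine ⟨σ F₃ / σ F₂, σ F₂ / σ F₁, ha, hb, hab_eq ▸ hab', hba_eq ▸ hba',
    hapos, haε, hbpos, hbε, ?_, ?_, ?_⟩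
  · rw [e1, e2]
  · have : (⟨σ F₃ / σ F₂ * (σ F₂ / σ F₁), hab_eq ▸ hab'⟩ : {x : ℝ // x ∈ S}) =
        ⟨σ F₃ / σ F₁, hab'⟩ := Subtype.ext hab_eq
    rw [e1, this, e3]
  · have : (⟨σ F₂ / σ F₁ * (σ F₃ / σ F₂ + 1), hba_eq ▸ hba'⟩ : {x : ℝ // x ∈ S}) =
        ⟨σ (F₂ ∪ F₃) / σ F₁, hba'⟩ := Subtype.ext hba_eq
    rw [e1, this, e4]

end Gos
end

section
/- Let S be an HL semigroup. For every finite partition S = C₁ ∪ ⋯ ∪ C_r (r ∈ ℕ) and every ε > 0, there exist an index m ≤ r and elements x, y ∈ S such that all four elements x, y, x + y and y/x belong to C_m ∩ (0, ε). (Corollary 4.4: the pattern x, y, x+y, y/x is partition regular near zero.) -/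
open Filter Set

attribute [local instance] Ultrafilter.add Ultrafilter.addSemigroup

/-- Strengthened form of `Hindman.exists_idempotent_ultrafilter_le_FS`:
the idempotent ultrafilter contains `FS (a.drop n)` for every `n`. -/
private theorem exists_idem_strong {M} [AddSemigroup M] (a : Stream' M) :
    ∃ U : Ultrafilter M, U + U = U ∧ ∀ n, ∀ᶠ m in U, m ∈ Hindman.FS (a.drop n) := by
  let S : Set (Ultrafilter M) := ⋂ n, { U | ∀ᶠ m in U, m ∈ Hindman.FS (a.drop n) }
  have h := exists_idempotent_in_compact_add_subsemigroup ?_ S ?_ ?_ ?_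
  · rcases h with ⟨U, hU, U_idem⟩
    exact ⟨U, U_idem, fun n => Set.mem_iInter.mp hU n⟩
  · exact Ultrafilter.continuous_add_left
  · apply IsCompact.nonempty_iInter_of_sequence_nonempty_isCompact_isClosed
    · intro n U hU
      filter_upwards [hU]
      rw [← Stream'.drop_drop, ← Stream'.tail_eq_drop]
      exact Hindman.FS.tail _
    · intro n
      exact ⟨pure _, mem_pure.mpr <| Hindman.FS.head _⟩
    · exact (ultrafilter_isClosed_basic _).isCompact
    · intro n
      apply ultrafilter_isClosed_basic
  · exact IsClosed.isCompact (isClosed_iInter fun i => ultrafilter_isClosed_basic _)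
  · intro U hU V hV
    rw [Set.mem_iInter] at *
    intro n
    rw [Set.mem_setOf_eq, Ultrafilter.eventually_add]
    filter_upwards [hU n] with m hm
    obtain ⟨n', hn⟩ := Hindman.FS.add hm
    filter_upwards [hV (n' + n)] with m' hm'
    apply hn
    simpa only [Stream'.drop_drop, add_comm] using hm'

/-- Pushing forward along an additive map commutes with ultrafilter addition. -/
private theorem map_add_conv (f : ℝ → ℝ) (hf : ∀ u v : ℝ, f (u + v) = f u + f v)
    (V W : Ultrafilter ℝ) : V.map f + W.map f = (V + W).map f := by
  apply Ultrafilter.coe_injective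
  apply Filter.ext'
  intro p
  simp only [Ultrafilter.eventually_add, Ultrafilter.coe_map, Filter.eventually_map, hf]

/-- Corollary 4.4: the pattern `x, y, x+y, y/x` is partition regular near zero. -/
theorem sums_and_quotients_near_zero (S : Set ℝ) (hS : IsHL S)
    (r : ℕ) (C : Fin r → Set ℝ) (hcover : S = ⋃ i, C i) (ε : ℝ) (hε : 0 < ε) :
    ∃ (m : Fin r), ∃ x ∈ S, ∃ y ∈ S,
      x ∈ C m ∩ Set.Ioo 0 ε ∧ y ∈ C m ∩ Set.Ioo 0 ε ∧
      x + y ∈ C m ∩ Set.Ioo 0 ε ∧ y / x ∈ C m ∩ Set.Ioo 0 ε := by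
  classical
  obtain ⟨hpos, hdense, hadd, hmul, hdiv⟩ := hS
  -- the degenerate case `r = 0`
  rcases Nat.eq_zero_or_pos r with hr | hr
  · exfalso
    have hSempty : S = ∅ := by
      rw [hcover]
      subst hr
      simp
    have h1 : (1:ℝ) ∈ closure S := hdense (by norm_num : (1:ℝ) ∈ Set.Ioi 0)
    rw [hSempty, closure_empty] at h1
    exact h1
  -- there are elements of `S` arbitrarily close to `0`
  have hsmall : ∀ δ : ℝ, 0 < δ → ∃ s, s ∈ S ∧ s ∈ Set.Ioo 0 δ := by
    intro δ hδ
    have h2 : (δ/2) ∈ Set.Ioi (0:ℝ) := by simpa using half_pos hδ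
    have h3 := hdense h2
    rw [mem_closure_iff] at h3
    obtain ⟨s, hs1, hs2⟩ := h3 (Set.Ioo 0 δ) isOpen_Ioo ⟨half_pos hδ, half_lt_self hδ⟩
    exact ⟨s, hs2, hs1⟩
  -- a fast decaying sequence in `S`
  choose g hgS hgIoo using fun n : ℕ => hsmall ((1/2)^(n+1)) (by positivity)
  set aa : Stream' ℝ := g with haadef
  have halfpow : ∀ n : ℕ, ((1:ℝ)/2)^(n+1) < (1/2)^n := by
    intro n
    have hp : (0:ℝ) < (1/2)^n := by positivity
    rw [pow_succ]
    linarith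
  have hFSbound : ∀ (n : ℕ) (m : ℝ), m ∈ Hindman.FS (aa.drop n) →
      m ∈ S ∧ 0 < m ∧ m < (1/2 : ℝ)^n := by
    have key : ∀ (b : Stream' ℝ) (m : ℝ), m ∈ Hindman.FS b →
        ∀ n : ℕ, b = aa.drop n → m ∈ S ∧ 0 < m ∧ m < (1/2 : ℝ)^n := by
      intro b m hm
      induction hm with
      | head' b =>
        intro n hb
        have hh : b.head = g n := by rw [hb, Stream'.head_drop]; rfl
        rw [hh]
        exact ⟨hgS n, (hgIoo n).1, lt_trans (hgIoo n).2 (halfpow n)⟩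
      | tail' b m h ih =>
        intro n hb
        have hb' : b.tail = aa.drop (n+1) := by
          rw [hb, Stream'.tail_eq_drop, Stream'.drop_drop, Nat.add_comm]
        obtain ⟨h1, h2, h3⟩ := ih (n+1) hb'
        exact ⟨h1, h2, lt_trans h3 (halfpow n)⟩
      | cons' b m h ih =>
        intro n hb
        have hb' : b.tail = aa.drop (n+1) := by
          rw [hb, Stream'.tail_eq_drop, Stream'.drop_drop, Nat.add_comm]
        obtain ⟨h1, h2, h3⟩ := ih (n+1) hb'
        have hh : b.head = g n := by rw [hb, Stream'.head_drop]; rfl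
        rw [hh]
        have hgb := (hgIoo n).2
        have hg0 := (hgIoo n).1
        have e2 : 2 * ((1:ℝ)/2)^(n+1) = (1/2)^n := by rw [pow_succ]; ring
        exact ⟨hadd _ (hgS n) _ h1, by linarith, by linarith⟩
    intro n m hm
    exact key _ m hm n rfl
  -- the idempotent ultrafilter living near zero
  obtain ⟨U, hUidem, hUFS⟩ := exists_idem_strong aa
  have hU0 : ∀ δ : ℝ, 0 < δ → (S ∩ Set.Ioo 0 δ) ∈ U := by
    intro δ hδ
    obtain ⟨n, hn⟩ := exists_pow_lt_of_lt_one hδ (by norm_num : (1:ℝ)/2 < 1)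
    have h1 : {m : ℝ | m ∈ Hindman.FS (aa.drop n)} ∈ U := hUFS n
    refine Filter.mem_of_superset h1 ?_
    intro m hm
    obtain ⟨hmS, hm0, hmlt⟩ := hFSbound n m hm
    exact ⟨hmS, hm0, lt_trans hmlt hn⟩
  -- setup
  set ε' : ℝ := min ε 1 with hε'def
  have hε'0 : 0 < ε' := lt_min hε one_pos
  have hε'ε : ε' ≤ ε := min_le_left _ _
  have hε'1 : ε' ≤ 1 := min_le_right _ _
  set P : ℝ → Ultrafilter ℝ := fun x => U.map (fun t => t / x) with hPdef
  -- dilated ultrafilters still live near zero on S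
  have hPsmall : ∀ x, x ∈ S → x ∈ Set.Ioo (0:ℝ) 1 → ∀ δ : ℝ, 0 < δ →
      (S ∩ Set.Ioo 0 δ) ∈ P x := by
    intro x hxS hxI δ hδ
    rw [hPdef]
    rw [Ultrafilter.mem_map]
    have hx0 : (0:ℝ) < x := hxI.1
    refine Filter.mem_of_superset (hU0 (x * δ) (by positivity)) ?_
    rintro t ⟨htS, ht0, htδ⟩
    refine ⟨(hdiv x hxS hxI.2 t htS).1, div_pos ht0 hx0, ?_⟩
    rw [div_lt_iff₀ hx0]
    linarith [htδ]
  -- dilated ultrafilters are idempotent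
  have hPidem : ∀ x : ℝ, P x + P x = P x := by
    intro x
    rw [hPdef]
    rw [map_add_conv (fun t => t / x) (fun u v => add_div u v x) U U, hUidem]
  -- choosing the cell of each dilated ultrafilter
  have hPcell : ∀ x, x ∈ S → x ∈ Set.Ioo (0:ℝ) 1 →
      ∃ m : Fin r, (C m ∩ Set.Ioo 0 ε') ∈ P x := by
    intro x hxS hxI
    have h1 : (S ∩ Set.Ioo 0 ε') ∈ P x := hPsmall x hxS hxI ε' hε'0
    have h2 : (⋃ m ∈ (Set.univ : Set (Fin r)), (C m ∩ Set.Ioo 0 ε')) ∈ P x := by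
      refine Filter.mem_of_superset h1 ?_
      rintro t ⟨htS, htI⟩
      rw [hcover] at htS
      obtain ⟨m, hm⟩ := Set.mem_iUnion.1 htS
      exact Set.mem_biUnion (Set.mem_univ m) ⟨hm, htI⟩
    obtain ⟨m, _, hm⟩ := (Ultrafilter.finite_biUnion_mem_iff Set.finite_univ).1 h2
    exact ⟨m, hm⟩
  set κ : ℝ → Fin r := fun x =>
    if h : ∃ m : Fin r, (C m ∩ Set.Ioo 0 ε') ∈ P x then h.choose else ⟨0, hr⟩ with hκdef
  have hκ : ∀ x, x ∈ S → x ∈ Set.Ioo (0:ℝ) 1 → (C (κ x) ∩ Set.Ioo 0 ε') ∈ P x := by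
    intro x hxS hxI
    have h := hPcell x hxS hxI
    rw [hκdef]
    simp only [dif_pos h]
    exact h.choose_spec
  set Bf : ℝ → Set ℝ := fun x => C (κ x) ∩ Set.Ioo 0 ε' with hBfdef
  set Bhat : ℝ → Set ℝ := fun x => Bf x ∩ {w | {v | w + v ∈ Bf x} ∈ P x} with hBhatdef
  have hBhat : ∀ x, x ∈ S → x ∈ Set.Ioo (0:ℝ) 1 → Bhat x ∈ P x := by
    intro x hxS hxI
    refine Filter.inter_mem (hκ x hxS hxI) ?_
    have h1 : Bf x ∈ P x + P x := by rw [hPidem x]; exact hκ x hxS hxI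
    have h2 : ∀ᶠ w in ↑(P x + P x), w ∈ Bf x := h1
    rw [Ultrafilter.eventually_add] at h2
    exact h2
  have hFset : ∀ x, x ∈ S → x ∈ Set.Ioo (0:ℝ) 1 → {t : ℝ | t / x ∈ Bhat x} ∈ U := by
    intro x hxS hxI
    have h := hBhat x hxS hxI
    rw [hPdef] at h
    rwa [Ultrafilter.mem_map] at h
  -- the recursive construction of the dilation chain
  have recc : ∀ k : ℕ, ∃ c : Fin k → ℝ, (∀ i, c i ∈ S ∧ c i ∈ Set.Ioo (0:ℝ) 1) ∧
      (∀ i j, i < j → c j / c i ∈ Bhat (c i)) := by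
    intro k
    induction k with
    | zero => exact ⟨fun i => i.elim0, fun i => i.elim0, fun i => i.elim0⟩
    | succ k ih =>
      obtain ⟨c, hc1, hc2⟩ := ih
      have hT : ((S ∩ Set.Ioo 0 1) ∩ ⋂ i : Fin k, {t : ℝ | t / c i ∈ Bhat (c i)}) ∈ U := by
        refine Filter.inter_mem (hU0 1 one_pos) ?_
        exact (Filter.iInter_mem).2 fun i => hFset (c i) (hc1 i).1 (hc1 i).2
      obtain ⟨t, ⟨htS, htI⟩, htF⟩ := Ultrafilter.nonempty_of_mem hT
      refine ⟨Fin.snoc c t, ?_, ?_⟩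
      · intro i
        refine Fin.lastCases ?_ ?_ i
        · rw [Fin.snoc_last]; exact ⟨htS, htI⟩
        · intro i0
          rw [Fin.snoc_castSucc]
          exact hc1 i0
      · intro i j
        refine Fin.lastCases ?_ ?_ j
        · -- j = last
          intro hij'
          have hine : i ≠ Fin.last k := by
            intro h; rw [h] at hij'; exact lt_irrefl _ hij'
          obtain ⟨i0, rfl⟩ := Fin.exists_castSucc_eq.2 hine
          rw [Fin.snoc_last, Fin.snoc_castSucc]
          exact Set.mem_iInter.1 htF i0
        · intro j0 hij'
          have hine : i ≠ Fin.last k := by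
            intro h
            rw [h] at hij'
            exact absurd hij' (not_lt.2 (Fin.le_last _))
          obtain ⟨i0, rfl⟩ := Fin.exists_castSucc_eq.2 hine
          rw [Fin.snoc_castSucc, Fin.snoc_castSucc]
          refine hc2 i0 j0 ?_
          exact_mod_cast hij'
  obtain ⟨c, hc1, hc2⟩ := recc (r + 1)
  -- pigeonhole
  have hcard : Fintype.card (Fin r) < Fintype.card (Fin (r+1)) := by simp
  obtain ⟨i, j, hne, hκeq⟩ :=
    Fintype.exists_ne_map_eq_of_card_lt (fun i : Fin (r+1) => κ (c i)) hcard
  -- the main construction, given an ordered colliding pair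
  have main : ∀ i j : Fin (r+1), i < j → κ (c i) = κ (c j) →
      ∃ (m : Fin r), ∃ x ∈ S, ∃ y ∈ S,
      x ∈ C m ∩ Set.Ioo 0 ε ∧ y ∈ C m ∩ Set.Ioo 0 ε ∧
      x + y ∈ C m ∩ Set.Ioo 0 ε ∧ y / x ∈ C m ∩ Set.Ioo 0 ε := by
    clear hne hκeq i j
    intro i j hij hκeq
    obtain ⟨hxiS, hxiI⟩ := hc1 i
    obtain ⟨hxjS, hxjI⟩ := hc1 j
    have haBhat : c j / c i ∈ Bhat (c i) := hc2 i j hij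
    set m : Fin r := κ (c i) with hmdef
    set B : Set ℝ := C m ∩ Set.Ioo 0 ε' with hBdef
    set a : ℝ := c j / c i with hadef
    obtain ⟨haB, haShift⟩ := haBhat
    have ha0 : 0 < a := haB.2.1
    have hane : a ≠ 0 := ne_of_gt ha0
    have hxine : c i ≠ 0 := ne_of_gt hxiI.1
    have hcij : c i * a = c j := by
      rw [hadef, mul_div_cancel₀ _ hxine]
    have hPmap : P (c j) = (P (c i)).map (fun t => t / a) := by
      show U.map (fun t => t / c j) = (U.map (fun t => t / c i)).map (fun t => t / a)
      rw [Ultrafilter.map_map]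
      congr 1
      funext t
      show t / c j = t / c i / a
      rw [div_div, hcij]
    have hV1 : B ∈ P (c j) := by
      have h := hκ (c j) hxjS hxjI
      rwa [← hκeq] at h
    have hV2 : {v : ℝ | a * v ∈ B} ∈ P (c j) := by
      rw [hPmap, Ultrafilter.mem_map]
      have hpre : (fun t : ℝ => t / a) ⁻¹' {v : ℝ | a * v ∈ B} = B := by
        ext t
        simp only [Set.mem_preimage, Set.mem_setOf_eq]
        rw [mul_div_cancel₀ _ hane]
      rw [hpre]
      exact hκ (c i) hxiS hxiI
    have hV3 : {v : ℝ | a + a * v ∈ B} ∈ P (c j) := by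
      rw [hPmap, Ultrafilter.mem_map]
      have hpre : (fun t : ℝ => t / a) ⁻¹' {v : ℝ | a + a * v ∈ B} = {v : ℝ | a + v ∈ B} := by
        ext t
        simp only [Set.mem_preimage, Set.mem_setOf_eq]
        rw [mul_div_cancel₀ _ hane]
      rw [hpre]
      exact haShift
    obtain ⟨v, ⟨hv1, hv2⟩, hv3⟩ :=
      Ultrafilter.nonempty_of_mem (Filter.inter_mem (Filter.inter_mem hV1 hV2) hV3)
    have hCmS : C m ⊆ S := by
      intro z hz
      rw [hcover]
      exact Set.mem_iUnion.2 ⟨m, hz⟩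
    have toGoal : ∀ z : ℝ, z ∈ B → z ∈ C m ∩ Set.Ioo 0 ε := by
      rintro z ⟨hz1, hz2, hz3⟩
      exact ⟨hz1, hz2, lt_of_lt_of_le hz3 hε'ε⟩
    refine ⟨m, a, hCmS haB.1, a * v, hCmS hv2.1, toGoal a haB, toGoal _ hv2, toGoal _ hv3, ?_⟩
    rw [mul_div_cancel_left₀ _ hane]
    exact toGoal v hv1
  rcases hne.lt_or_gt with hij | hij
  · exact main i j hij hκeq
  · exact main j i hij hκeq.symm
end

section
/- Let S be an HL semigroup, fix s₀ ∈ S, and let u be an ultrafilter on S belonging to 0⁺(S) with u + u = u. Then for every C ∈ D(u ⊗ u) there exist sequences ⟨xₙ⟩ and ⟨yₙ⟩ of elements of S such that: (1) every finite nonempty sum ∑_{n∈F} xₙ belongs to C, and for all finite nonempty F, G ⊆ ℕ with max F < min G, the quotient (∑_{n∈G} xₙ)/(∑_{n∈F} xₙ) belongs to C; and (2) for every finite nonempty F ⊆ ℕ and every k ∈ ℕ with k ≤ min F, the element ∑_{l∈F} ∏_{n=k}^{l} yₙ belongs to C. (Theorem 4.3.) -/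
/-- `0⁺(S)`: ultrafilters converging to zero along `S`. -/
def zeroPlus (S : Set ℝ) : Set (Ultrafilter ℝ) :=
  {p | ∀ ε > (0:ℝ), {x | x ∈ S ∧ x < ε} ∈ p}

/-- Addition of ultrafilters: `A ∈ p + q` iff `{x | {y | x + y ∈ A} ∈ q} ∈ p`. -/
def uAdd (p q : Ultrafilter ℝ) : Ultrafilter ℝ :=
  p.bind fun x => q.map fun y => x + y

/-- Tensor product of ultrafilters: `A ∈ p ⊗ q` iff `{x | {y | (x,y) ∈ A} ∈ q} ∈ p`. -/
def tensor (p q : Ultrafilter ℝ) : Ultrafilter (ℝ × ℝ) :=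
  p.bind fun x => q.map fun y => (x, y)

/-- The map `D(x,y) = y/x` if `x < 1`, and `s₀` otherwise. -/
noncomputable def Dmap (s₀ : ℝ) : ℝ × ℝ → ℝ := fun z => if z.1 < 1 then z.2 / z.1 else s₀

/-! ### Auxiliary machinery -/

/-- The "star set" of `A` with respect to an ultrafilter `u`. -/
def starSet (u : Ultrafilter ℝ) (A : Set ℝ) : Set ℝ :=
  {x | x ∈ A ∧ {y | x + y ∈ A} ∈ u}

lemma starSet_subset (u : Ultrafilter ℝ) (A : Set ℝ) : starSet u A ⊆ A := fun _ h => h.1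

lemma starSet_mem {u : Ultrafilter ℝ} (hidem : uAdd u u = u) {A : Set ℝ} (hA : A ∈ u) :
    starSet u A ∈ u := by
  have h1 : {x | {y | x + y ∈ A} ∈ u} ∈ u := by
    have h2 : A ∈ uAdd u u := by rw [hidem]; exact hA
    exact h2
  exact Filter.inter_mem hA h1

lemma starSet_shift {u : Ultrafilter ℝ} (hidem : uAdd u u = u) {A : Set ℝ} {x : ℝ}
    (hx : x ∈ starSet u A) : {y | x + y ∈ starSet u A} ∈ u := by
  have hT : {y | x + y ∈ A} ∈ u := hx.2
  refine Filter.mem_of_superset (starSet_mem hidem hT) ?_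
  intro y hy
  refine ⟨hy.1, ?_⟩
  refine Filter.mem_of_superset hy.2 ?_
  intro z hz
  simpa [add_assoc] using hz

/-- Compatibility of a pair of index sets. -/
def OKpair (F G : Finset ℕ) : Prop := F.Nonempty ∧ G.Nonempty ∧ ∀ a ∈ F, ∀ c ∈ G, a < c

/-- The set of admissible next elements, given the first `n` terms of `b`. -/
def constraint (u : Ultrafilter ℝ) (B : Set ℝ) (Φ : ℝ → Set ℝ) (b : ℕ → ℝ) (n : ℕ) :
    Set ℝ :=
  (starSet u B ∩
    ⋂ F ∈ (Finset.range n).powerset, ⋂ (_ : F.Nonempty),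
      ({y | (∑ i ∈ F, b i) + y ∈ starSet u B} ∩ starSet u (Φ (∑ i ∈ F, b i)))) ∩
  ⋂ F ∈ (Finset.range n).powerset, ⋂ G ∈ (Finset.range n).powerset, ⋂ (_ : OKpair F G),
      {y | (∑ i ∈ G, b i) + y ∈ starSet u (Φ (∑ i ∈ F, b i))}

/-- The invariant carried through the recursion. -/
def GGInv (u : Ultrafilter ℝ) (B : Set ℝ) (Φ : ℝ → Set ℝ) (b : ℕ → ℝ) (n : ℕ) : Prop :=
  (∀ F : Finset ℕ, F ⊆ Finset.range n → F.Nonempty → (∑ i ∈ F, b i) ∈ starSet u B) ∧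
  (∀ F G : Finset ℕ, F ⊆ Finset.range n → G ⊆ Finset.range n → OKpair F G →
      (∑ i ∈ G, b i) ∈ starSet u (Φ (∑ i ∈ F, b i)))

lemma constraint_mem {u : Ultrafilter ℝ} (hidem : uAdd u u = u) {B : Set ℝ} (hB : B ∈ u)
    {Φ : ℝ → Set ℝ} (hΦ : ∀ x ∈ B, Φ x ∈ u) {b : ℕ → ℝ} {n : ℕ}
    (hInv : GGInv u B Φ b n) : constraint u B Φ b n ∈ u := by
  refine Filter.inter_mem (Filter.inter_mem (starSet_mem hidem hB) ?_) ?_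
  · rw [Filter.biInter_finset_mem]
    intro F hF
    by_cases hne : F.Nonempty
    · have hsF := hInv.1 F (Finset.mem_powerset.mp hF) hne
      have e : (⋂ (_ : F.Nonempty),
          ({y | (∑ i ∈ F, b i) + y ∈ starSet u B} ∩ starSet u (Φ (∑ i ∈ F, b i)))) =
          ({y | (∑ i ∈ F, b i) + y ∈ starSet u B} ∩ starSet u (Φ (∑ i ∈ F, b i))) := by
        simp [hne]
      rw [e]
      exact Filter.inter_mem (starSet_shift hidem hsF)
        (starSet_mem hidem (hΦ _ hsF.1))
    · have e : (⋂ (_ : F.Nonempty),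
          ({y | (∑ i ∈ F, b i) + y ∈ starSet u B} ∩ starSet u (Φ (∑ i ∈ F, b i)))) =
          Set.univ := by simp [hne]
      rw [e]; exact Filter.univ_mem
  · rw [Filter.biInter_finset_mem]
    intro F hF
    rw [Filter.biInter_finset_mem]
    intro G hG
    by_cases hok : OKpair F G
    · have h := hInv.2 F G (Finset.mem_powerset.mp hF) (Finset.mem_powerset.mp hG) hok
      have e : (⋂ (_ : OKpair F G),
          {y | (∑ i ∈ G, b i) + y ∈ starSet u (Φ (∑ i ∈ F, b i))}) =
          {y | (∑ i ∈ G, b i) + y ∈ starSet u (Φ (∑ i ∈ F, b i))} := by simp [hok]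
      rw [e]
      exact starSet_shift hidem h
    · have e : (⋂ (_ : OKpair F G),
          {y | (∑ i ∈ G, b i) + y ∈ starSet u (Φ (∑ i ∈ F, b i))}) = Set.univ := by
        simp [hok]
      rw [e]; exact Filter.univ_mem

lemma subset_range_of_not_mem {F : Finset ℕ} {n : ℕ} (hF : F ⊆ Finset.range (n+1))
    (hn : n ∉ F) : F ⊆ Finset.range n := by
  intro i hi
  have := Finset.mem_range.mp (hF hi)
  have : i ≠ n := fun h => hn (h ▸ hi)
  simp only [Finset.mem_range]
  omega

lemma GGInv_step {u : Ultrafilter ℝ} {B : Set ℝ} {Φ : ℝ → Set ℝ} {b : ℕ → ℝ} {n : ℕ}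
    (hInv : GGInv u B Φ b n) (hmem : b n ∈ constraint u B Φ b n) : GGInv u B Φ b (n+1) := by
  obtain ⟨⟨h0, h1⟩, h2⟩ := hmem
  have h1' : ∀ F : Finset ℕ, F ⊆ Finset.range n → F.Nonempty →
      ((∑ i ∈ F, b i) + b n ∈ starSet u B ∧ b n ∈ starSet u (Φ (∑ i ∈ F, b i))) := by
    intro F hF hne
    have := Set.mem_iInter₂.mp h1 F (Finset.mem_powerset.mpr hF)
    have := Set.mem_iInter.mp this hne
    exact ⟨this.1, this.2⟩
  have h2' : ∀ F G : Finset ℕ, F ⊆ Finset.range n → G ⊆ Finset.range n → OKpair F G →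
      (∑ i ∈ G, b i) + b n ∈ starSet u (Φ (∑ i ∈ F, b i)) := by
    intro F G hF hG hok
    have := Set.mem_iInter₂.mp h2 F (Finset.mem_powerset.mpr hF)
    have := Set.mem_iInter₂.mp this G (Finset.mem_powerset.mpr hG)
    exact Set.mem_iInter.mp this hok
  constructor
  · intro F hF hne
    by_cases hn : n ∈ F
    · rw [← Finset.sum_erase_add F _ hn]
      have hF' : F.erase n ⊆ Finset.range n := by
        intro i hi
        have hiF := Finset.mem_of_mem_erase hi
        have := Finset.mem_range.mp (hF hiF)
        have h2 := Finset.ne_of_mem_erase hi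
        simp only [Finset.mem_range]; omega
      rcases (F.erase n).eq_empty_or_nonempty with he | hne'
      · rw [he]; simpa using h0
      · exact (h1' _ hF' hne').1
    · exact hInv.1 F (subset_range_of_not_mem hF hn) hne
  · intro F G hF hG hok
    have hnF : n ∉ F := by
      intro hn
      obtain ⟨c, hc⟩ := hok.2.1
      have := hok.2.2 n hn c hc
      have := Finset.mem_range.mp (hG hc)
      omega
    have hF' : F ⊆ Finset.range n := subset_range_of_not_mem hF hnF
    by_cases hn : n ∈ G
    · rw [← Finset.sum_erase_add G _ hn]
      have hG' : G.erase n ⊆ Finset.range n := by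
        intro i hi
        have hiG := Finset.mem_of_mem_erase hi
        have := Finset.mem_range.mp (hG hiG)
        have h2 := Finset.ne_of_mem_erase hi
        simp only [Finset.mem_range]; omega
      rcases (G.erase n).eq_empty_or_nonempty with he | hne'
      · rw [he]
        simpa using (h1' F hF' hok.1).2
      · refine h2' F _ hF' hG' ⟨hok.1, hne', ?_⟩
        intro a ha c hc
        exact hok.2.2 a ha c (Finset.mem_of_mem_erase hc)
    · exact hInv.2 F G hF' (subset_range_of_not_mem hG hn) hok

open Classical in
noncomputable def pickR (A : Set ℝ) : ℝ := if h : A.Nonempty then h.choose else 0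

lemma pickR_mem {A : Set ℝ} (h : A.Nonempty) : pickR A ∈ A := by
  unfold pickR
  rw [dif_pos h]
  exact h.choose_spec

lemma Dmap_lt {s₀ x y : ℝ} (h : x < 1) : Dmap s₀ (x, y) = y / x := if_pos h

/-- Recursive approximations. -/
noncomputable def buildF (u : Ultrafilter ℝ) (B : Set ℝ) (Φ : ℝ → Set ℝ) : ℕ → ℕ → ℝ
  | 0 => fun _ => 0
  | n+1 => fun k =>
      if k = n then pickR (constraint u B Φ (buildF u B Φ n) n) else buildF u B Φ n k

/-- The limit sequence. -/
noncomputable def buildSeq (u : Ultrafilter ℝ) (B : Set ℝ) (Φ : ℝ → Set ℝ) (n : ℕ) : ℝ :=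
  buildF u B Φ (n+1) n

lemma buildF_agree (u : Ultrafilter ℝ) (B : Set ℝ) (Φ : ℝ → Set ℝ) :
    ∀ m k, k < m → buildF u B Φ m k = buildSeq u B Φ k := by
  intro m
  induction m with
  | zero => intro k hk; exact absurd hk (Nat.not_lt_zero k)
  | succ m ih =>
    intro k hk
    rcases Nat.lt_succ_iff_lt_or_eq.mp hk with hlt | he
    · have : buildF u B Φ (m+1) k = buildF u B Φ m k := by
        simp [buildF, Nat.ne_of_lt hlt]
      rw [this, ih k hlt]
    · subst he; rfl

lemma sum_eq_of_agree {b b' : ℕ → ℝ} {n : ℕ} (h : ∀ k < n, b k = b' k) {F : Finset ℕ}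
    (hF : F ⊆ Finset.range n) : ∑ i ∈ F, b i = ∑ i ∈ F, b' i :=
  Finset.sum_congr rfl fun i hi => h i (Finset.mem_range.mp (hF hi))

lemma constraint_congr {u : Ultrafilter ℝ} {B : Set ℝ} {Φ : ℝ → Set ℝ} {b b' : ℕ → ℝ}
    {n : ℕ} (h : ∀ k < n, b k = b' k) : constraint u B Φ b n = constraint u B Φ b' n := by
  unfold constraint
  congr 1
  · congr 1
    refine Set.iInter₂_congr fun F hF => ?_
    rw [sum_eq_of_agree h (Finset.mem_powerset.mp hF)]
  · refine Set.iInter₂_congr fun F hF => ?_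
    refine Set.iInter₂_congr fun G hG => ?_
    rw [sum_eq_of_agree h (Finset.mem_powerset.mp hF),
      sum_eq_of_agree h (Finset.mem_powerset.mp hG)]

lemma GGInv_all {u : Ultrafilter ℝ} (hidem : uAdd u u = u) {B : Set ℝ} (hB : B ∈ u)
    {Φ : ℝ → Set ℝ} (hΦ : ∀ x ∈ B, Φ x ∈ u) :
    ∀ n, GGInv u B Φ (buildSeq u B Φ) n := by
  intro n
  induction n with
  | zero =>
    constructor
    · intro F hF hne
      obtain ⟨a, ha⟩ := hne
      exact absurd (Finset.mem_range.mp (hF ha)) (by omega)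
    · intro F G hF hG hok
      obtain ⟨a, ha⟩ := hok.1
      exact absurd (Finset.mem_range.mp (hF ha)) (by omega)
  | succ n ih =>
    refine GGInv_step ih ?_
    have hcon : constraint u B Φ (buildF u B Φ n) n = constraint u B Φ (buildSeq u B Φ) n :=
      constraint_congr (fun k hk => buildF_agree u B Φ n k hk)
    have hbn : buildSeq u B Φ n = pickR (constraint u B Φ (buildF u B Φ n) n) := by
      simp [buildSeq, buildF]
    rw [hbn, hcon]
    exact pickR_mem (Filter.nonempty_of_mem (constraint_mem hidem hB hΦ ih))

/-- Core combinatorial lemma: Milliken–Taylor-style construction. -/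
lemma core {u : Ultrafilter ℝ} (hidem : uAdd u u = u) {B : Set ℝ} (hB : B ∈ u)
    {Φ : ℝ → Set ℝ} (hΦ : ∀ x ∈ B, Φ x ∈ u) :
    ∃ b : ℕ → ℝ, (∀ F : Finset ℕ, F.Nonempty → (∑ i ∈ F, b i) ∈ B) ∧
      (∀ F G : Finset ℕ, OKpair F G → (∑ i ∈ G, b i) ∈ Φ (∑ i ∈ F, b i)) := by
  refine ⟨buildSeq u B Φ, ?_, ?_⟩
  · intro F hne
    have hsub : F ⊆ Finset.range (F.sup id + 1) := by
      intro i hi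
      have := Finset.le_sup (f := id) hi
      simp only [Finset.mem_range, id] at *
      omega
    exact ((GGInv_all hidem hB hΦ (F.sup id + 1)).1 F hsub hne).1
  · intro F G hok
    set n := ((F ∪ G).sup id + 1) with hn
    have hsubF : F ⊆ Finset.range n := by
      intro i hi
      have := Finset.le_sup (f := id) (Finset.mem_union_left G hi)
      simp only [Finset.mem_range, id] at *
      omega
    have hsubG : G ⊆ Finset.range n := by
      intro i hi
      have := Finset.le_sup (f := id) (Finset.mem_union_right F hi)
      simp only [Finset.mem_range, id] at *
      omega
    exact ((GGInv_all hidem hB hΦ n).2 F G hsubF hsubG hok).1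

/-- Theorem 4.3. -/
theorem sums_quotients_products_near_zero (S : Set ℝ) (hS : IsHL S)
    (s₀ : ℝ) (hs₀ : s₀ ∈ S) (u : Ultrafilter ℝ)
    (hu : u ∈ zeroPlus S) (hidem : uAdd u u = u)
    (C : Set ℝ) (hC : C ∈ (tensor u u).map (Dmap s₀)) :
    ∃ (x y : ℕ → ℝ), (∀ n, x n ∈ S) ∧ (∀ n, y n ∈ S) ∧
      (∀ F : Finset ℕ, F.Nonempty → (∑ n ∈ F, x n) ∈ C) ∧
      (∀ F G : Finset ℕ, F.Nonempty → G.Nonempty → (∀ a ∈ F, ∀ b ∈ G, a < b) →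
        (∑ n ∈ G, x n) / (∑ n ∈ F, x n) ∈ C) ∧
      (∀ F : Finset ℕ, F.Nonempty → ∀ k : ℕ, (∀ l ∈ F, k ≤ l) →
        (∑ l ∈ F, ∏ n ∈ Finset.Icc k l, y n) ∈ C) := by
  classical
  -- Unpack `hC`.
  have hA : {x : ℝ | {y : ℝ | Dmap s₀ (x, y) ∈ C} ∈ u} ∈ u := Ultrafilter.mem_map.mp hC
  have hW : {x : ℝ | x ∈ S ∧ x < 1} ∈ u := hu 1 one_pos
  have hB₀ : ({x : ℝ | x ∈ S ∧ x < 1} ∩ {x : ℝ | {y : ℝ | Dmap s₀ (x, y) ∈ C} ∈ u}) ∈ u :=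
    Filter.inter_mem hW hA
  obtain ⟨a, ⟨haS, ha1⟩, haE⟩ := Filter.nonempty_of_mem hB₀
  have haE : {y : ℝ | Dmap s₀ (a, y) ∈ C} ∈ u := haE
  have hB : (({x : ℝ | x ∈ S ∧ x < 1} ∩ {x : ℝ | {y : ℝ | Dmap s₀ (x, y) ∈ C} ∈ u}) ∩
      {y : ℝ | Dmap s₀ (a, y) ∈ C}) ∈ u := Filter.inter_mem hB₀ haE
  have hΦ : ∀ x ∈ (({x : ℝ | x ∈ S ∧ x < 1} ∩ {x : ℝ | {y : ℝ | Dmap s₀ (x, y) ∈ C} ∈ u}) ∩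
      {y : ℝ | Dmap s₀ (a, y) ∈ C}),
      (fun x : ℝ => {y : ℝ | Dmap s₀ (x, y) ∈ C}) x ∈ u := fun x hx => hx.1.2
  obtain ⟨b, hsum, hpair⟩ := core hidem hB hΦ
  have hbB : ∀ m, b m ∈ (({x : ℝ | x ∈ S ∧ x < 1} ∩
      {x : ℝ | {y : ℝ | Dmap s₀ (x, y) ∈ C} ∈ u}) ∩ {y : ℝ | Dmap s₀ (a, y) ∈ C}) := by
    intro m
    have := hsum {m} (Finset.singleton_nonempty m)
    simpa using this
  have hbS : ∀ m, b m ∈ S := fun m => (hbB m).1.1.1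
  have hb1 : ∀ m, b m < 1 := fun m => (hbB m).1.1.2
  have hbpos : ∀ m, 0 < b m := fun m => hS.1 _ (hbS m)
  have hbne : ∀ m, b m ≠ 0 := fun m => ne_of_gt (hbpos m)
  have hapos : 0 < a := hS.1 a haS
  have hane : a ≠ 0 := ne_of_gt hapos
  have himg : ∀ F : Finset ℕ, ∑ i ∈ F.image (· + 1), b i = ∑ n ∈ F, b (n + 1) := by
    intro F
    exact Finset.sum_image (by intro p _ q _ h; exact Nat.add_right_cancel h)
  refine ⟨fun n => b (n+1) / a, fun n => b (n+1) / b n, ?_, ?_, ?_, ?_, ?_⟩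
  · intro n; exact (hS.2.2.2.2 a haS ha1 (b (n+1)) (hbS (n+1))).1
  · intro n; exact (hS.2.2.2.2 (b n) (hbS n) (hb1 n) (b (n+1)) (hbS (n+1))).1
  · -- all finite sums of `x` lie in `C`
    intro F hne
    have e1 : (∑ n ∈ F, b (n+1) / a) = (∑ i ∈ F.image (· + 1), b i) / a := by
      rw [himg F, Finset.sum_div]
    rw [e1]
    have hmem := hsum (F.image (· + 1)) (hne.image _)
    have h2 := hmem.2
    rwa [Set.mem_setOf_eq, Dmap_lt ha1] at h2
  · -- quotients of later sums by earlier sums lie in `C`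
    intro F G hFne hGne hlt
    have hok : OKpair (F.image (· + 1)) (G.image (· + 1)) := by
      refine ⟨hFne.image _, hGne.image _, ?_⟩
      intro p hp q hq
      simp only [Finset.mem_image] at hp hq
      obtain ⟨p', hp', rfl⟩ := hp
      obtain ⟨q', hq', rfl⟩ := hq
      have := hlt p' hp' q' hq'
      omega
    have hpairm := hpair _ _ hok
    have hsF : (∑ i ∈ F.image (· + 1), b i) ∈ (({x : ℝ | x ∈ S ∧ x < 1} ∩
        {x : ℝ | {y : ℝ | Dmap s₀ (x, y) ∈ C} ∈ u}) ∩ {y : ℝ | Dmap s₀ (a, y) ∈ C}) :=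
      hsum _ (hFne.image _)
    have hsF1 : (∑ i ∈ F.image (· + 1), b i) < 1 := hsF.1.1.2
    have hCq : (∑ i ∈ G.image (· + 1), b i) / (∑ i ∈ F.image (· + 1), b i) ∈ C := by
      have := hpairm
      rwa [Set.mem_setOf_eq, Dmap_lt hsF1] at this
    have key : (∑ n ∈ G, b (n+1) / a) / (∑ n ∈ F, b (n+1) / a)
        = (∑ i ∈ G.image (· + 1), b i) / (∑ i ∈ F.image (· + 1), b i) := by
      rw [himg G, himg F,
        show (∑ n ∈ G, b (n+1) / a) = (∑ n ∈ G, b (n+1)) / a from (Finset.sum_div _ _ _).symm,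
        show (∑ n ∈ F, b (n+1) / a) = (∑ n ∈ F, b (n+1)) / a from (Finset.sum_div _ _ _).symm,
        div_div_div_comm, div_self hane, div_one]
    rw [key]
    exact hCq
  · -- sums of products of `y` lie in `C`
    intro F hne k hk
    have htel : ∀ l, k ≤ l → ∏ n ∈ Finset.Icc k l, (b (n+1) / b n) = b (l+1) / b k := by
      intro l hl
      induction l, hl using Nat.le_induction with
      | base => simp
      | succ l hl ih =>
        rw [Finset.prod_Icc_succ_top (by omega), ih, div_mul_div_comm,
          mul_comm (b k) (b (l+1)), mul_div_mul_left _ _ (hbne (l+1))]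
    have e1 : (∑ l ∈ F, ∏ n ∈ Finset.Icc k l, b (n+1) / b n)
        = (∑ i ∈ F.image (· + 1), b i) / b k := by
      rw [himg F, Finset.sum_div]
      exact Finset.sum_congr rfl fun l hl => htel l (hk l hl)
    rw [e1]
    have hok : OKpair {k} (F.image (· + 1)) := by
      refine ⟨Finset.singleton_nonempty k, hne.image _, ?_⟩
      intro p hp q hq
      simp only [Finset.mem_singleton] at hp
      simp only [Finset.mem_image] at hq
      obtain ⟨q', hq', rfl⟩ := hq
      have := hk q' hq'
      omega
    have hpairm := hpair _ _ hok
    simp only [Finset.sum_singleton] at hpairm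
    rwa [Set.mem_setOf_eq, Dmap_lt (hb1 k)] at hpairm
end

section
/- Let S be an HL semigroup, fix s₀ ∈ S, and let u be an ultrafilter on S belonging to 0⁺(S). Then the image ultrafilter D(u ⊗ u) also belongs to 0⁺(S). (Lemma 4.2.) -/
/-- Lemma 4.2: the image of `u ⊗ u` under `D` belongs to `0⁺(S)`. -/
theorem Dmap_tensor_mem_zeroPlus (S : Set ℝ) (hS : IsHL S)
    (s₀ : ℝ) (hs₀ : s₀ ∈ S) (u : Ultrafilter ℝ) (hu : u ∈ zeroPlus S) :
    (tensor u u).map (Dmap s₀) ∈ zeroPlus S := by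
  intro ε hε
  obtain ⟨hpos, -, -, -, hdiv⟩ := hS
  rw [Ultrafilter.mem_map]
  show {x | Dmap s₀ x ∈ S ∧ Dmap s₀ x < ε} ∈ tensor u u
  unfold tensor
  refine Filter.mem_bind'.mpr ?_
  have h1 : {x | x ∈ S ∧ x < 1} ∈ u := hu 1 one_pos
  filter_upwards [h1] with x hx
  rw [Ultrafilter.coe_map, Filter.mem_map]
  have hx0 : 0 < x := hpos x hx.1
  have h2 : {y | y ∈ S ∧ y < ε * x} ∈ u := hu (ε * x) (mul_pos hε hx0)
  filter_upwards [h2] with y hy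
  show Dmap s₀ (x, y) ∈ S ∧ Dmap s₀ (x, y) < ε
  simp only [Dmap, if_pos hx.2]
  exact ⟨(hdiv x hx.1 hx.2 y hy.1).1, (div_lt_iff₀ hx0).mpr hy.2⟩
end

section
/- Let S be an HL semigroup and let A ⊆ S be an IP-set near zero. Then there exists y ∈ A such that the set (−y + A) ∩ A = {x ∈ S : x + y ∈ A} ∩ A is also an IP-set near zero. (Lemma 3.2.) -/
/-- `A ⊆ S` is an IP-set near zero: there is a sequence in `S` whose series is
summable and all of whose finite nonempty sums lie in `A`. -/
def IPNearZero (S A : Set ℝ) : Prop :=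
  ∃ x : ℕ → ℝ, (∀ n, x n ∈ S) ∧ Summable x ∧
    ∀ F : Finset ℕ, F.Nonempty → (∑ n ∈ F, x n) ∈ A

/-- Lemma 3.2. -/
theorem exists_translate_IPNearZero (S : Set ℝ) (hS : IsHL S)
    (A : Set ℝ) (hA : A ⊆ S) (hIP : IPNearZero S A) :
    ∃ y ∈ A, IPNearZero S ({x | x ∈ S ∧ x + y ∈ A} ∩ A) := by
  obtain ⟨x, hxS, hxsum, hsums⟩ := hIP
  refine ⟨x 0, by simpa using hsums {0} ⟨0, by simp⟩, fun n => x (n + 1), fun n => hxS _,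
    hxsum.comp_injective (fun a b h => by simpa using h), fun F hF => ?_⟩
  have hinj : Set.InjOn (· + 1) F := fun a _ b _ h => by simpa using h
  have hsum : (∑ n ∈ F, x (n + 1)) = ∑ n ∈ F.image (· + 1), x n :=
    (Finset.sum_image (fun a ha b hb h => hinj ha hb h)).symm
  have h0 : (0 : ℕ) ∉ F.image (· + 1) := by simp
  have hA1 : (∑ n ∈ F, x (n + 1)) ∈ A := by
    rw [hsum]; exact hsums _ (hF.image _)
  refine ⟨⟨hA hA1, ?_⟩, hA1⟩
  have : (∑ n ∈ F, x (n + 1)) + x 0 = ∑ n ∈ insert 0 (F.image (· + 1)), x n := by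
    rw [Finset.sum_insert h0, hsum]; ring
  rw [this]
  exact hsums _ ⟨0, Finset.mem_insert_self _ _⟩
end

section
/- Let S be an HL semigroup, let A ⊆ S be an IP-set near zero, and let y ∈ S ∩ (0,1). Then the set y⁻¹A = {x ∈ S : x·y ∈ A} is also an IP-set near zero. (Lemma 3.3.) -/
/-- Lemma 3.3. -/
theorem preimage_mul_IPNearZero (S : Set ℝ) (hS : IsHL S)
    (A : Set ℝ) (hA : A ⊆ S) (hIP : IPNearZero S A)
    (y : ℝ) (hy : y ∈ S) (hy1 : y < 1) :
    IPNearZero S {x | x ∈ S ∧ x * y ∈ A} := by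
  obtain ⟨x, hxS, hxsum, hxF⟩ := hIP
  obtain ⟨hpos, -, -, -, hdiv⟩ := hS
  have hy0 : y ≠ 0 := ne_of_gt (hpos y hy)
  refine ⟨fun n => x n / y, fun n => (hdiv y hy hy1 (x n) (hxS n)).1, ?_, ?_⟩
  · simpa [div_eq_mul_inv] using hxsum.mul_right y⁻¹
  · intro F hF
    have hsum : (∑ n ∈ F, x n / y) = (∑ n ∈ F, x n) / y := by
      rw [Finset.sum_div]
    rw [hsum]
    have hmem : (∑ n ∈ F, x n) ∈ A := hxF F hF
    refine ⟨(hdiv y hy hy1 _ (hA hmem)).1, ?_⟩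
    rwa [div_mul_cancel₀ _ hy0]
end

section
/- Let S be an HL semigroup, let r ∈ ℕ, let S = A₁ ∪ ⋯ ∪ A_r be a partition of S into r cells, and let A ⊆ S be an IP-set near zero. Then there exists i ∈ {1, …, r} such that A ∩ A_i is also an IP-set near zero. (Lemma 3.4.) -/
lemma FS_eq_finset_sum (a : Stream' ℝ) (m : ℝ) (hm : m ∈ Hindman.FS a) :
    ∃ F : Finset ℕ, F.Nonempty ∧ m = ∑ n ∈ F, a.get n := by
  induction hm with
  | head' a => exact ⟨{0}, ⟨0, by simp⟩, by simp [Stream'.head]⟩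
  | tail' a m h ih =>
    obtain ⟨F, hF, hsum⟩ := ih
    refine ⟨F.image (· + 1), hF.image _, ?_⟩
    rw [Finset.sum_image (by intro x _ y _ h; exact Nat.succ_injective h)]
    simpa [Stream'.tail, Stream'.get] using hsum
  | cons' a m h ih =>
    obtain ⟨F, hF, hsum⟩ := ih
    refine ⟨insert 0 (F.image (· + 1)), ⟨0, by simp⟩, ?_⟩
    rw [Finset.sum_insert (by simp), Finset.sum_image (by intro x _ y _ h; exact Nat.succ_injective h)]
    simpa [Stream'.head, Stream'.tail, Stream'.get] using hsum

/-- Lemma 3.4. -/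
theorem IPNearZero_partition (S : Set ℝ) (hS : IsHL S)
    (r : ℕ) (B : Fin r → Set ℝ) (hcover : S = ⋃ i, B i)
    (A : Set ℝ) (hA : A ⊆ S) (hIP : IPNearZero S A) :
    ∃ i : Fin r, IPNearZero S (A ∩ B i) := by
  obtain ⟨x, hxS, hxsum, hxA⟩ := hIP
  -- every element of FS x is in A
  have hFSA : Hindman.FS x ⊆ A := by
    intro m hm
    obtain ⟨F, hF, rfl⟩ := FS_eq_finset_sum x m hm
    exact hxA F hF
  have hxpos : ∀ n, 0 < x n := fun n => hS.1 _ (hxS n)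
  -- every element of FS x is ≤ tsum x
  have hFSle : ∀ m ∈ Hindman.FS x, m ≤ ∑' n, x n := by
    intro m hm
    obtain ⟨F, hF, rfl⟩ := FS_eq_finset_sum x m hm
    exact Summable.sum_le_tsum F (fun n _ => (hxpos n).le) hxsum
  -- apply Hindman's theorem
  have hcov : Hindman.FS x ⊆ ⋃₀ Set.range (fun i : Fin r => Hindman.FS x ∩ B i) := by
    intro m hm
    have hmS : m ∈ S := hA (hFSA hm)
    rw [hcover] at hmS
    obtain ⟨i, hi⟩ := Set.mem_iUnion.mp hmS
    exact ⟨Hindman.FS x ∩ B i, ⟨i, rfl⟩, hm, hi⟩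
  obtain ⟨c, ⟨i, rfl⟩, b, hb⟩ := Hindman.FS_partition_regular x _
    (Set.finite_range _) hcov
  refine ⟨i, b.get, ?_, ?_, ?_⟩
  · intro n
    exact hA (hFSA (hb (Hindman.FS.singleton b n)).1)
  · refine summable_of_sum_range_le (c := ∑' n, x n)
      (fun n => (hS.1 _ (hA (hFSA (hb (Hindman.FS.singleton b n)).1))).le) ?_
    intro n
    rcases Nat.eq_zero_or_pos n with rfl | hn
    · simpa using tsum_nonneg fun n => (hxpos n).le
    · exact hFSle _ (hb (Hindman.FS.finset_sum b _ (by simpa using hn.ne'))).1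
  · intro F hF
    have := hb (Hindman.FS.finset_sum b F hF)
    exact ⟨hFSA this.1, this.2⟩
end

section
/- Let S be a dense subsemigroup of ((0,∞),+) and let A ⊆ S. Then A is an IP-set near zero if and only if there is an ultrafilter p on S with p + p = p and p ∈ 0⁺(S) such that A ∈ p. (Theorem 2.6, Hindman–Leader.) -/
/-- `S` is a dense subsemigroup of `((0,∞),+)`. -/
def IsDenseSubsemigroup (S : Set ℝ) : Prop :=
  (∀ x ∈ S, (0:ℝ) < x) ∧ (Set.Ioi (0:ℝ) ⊆ closure S) ∧ (∀ x ∈ S, ∀ y ∈ S, x + y ∈ S)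

open Filter

attribute [local instance] Ultrafilter.add Ultrafilter.addSemigroup

lemma uAdd_eq (p q : Ultrafilter ℝ) : uAdd p q = p + q := rfl

lemma mem_uAdd (p q : Ultrafilter ℝ) (A : Set ℝ) :
    A ∈ uAdd p q ↔ {x | {y | x + y ∈ A} ∈ q} ∈ p := Iff.rfl

/-- The "star" set of `B` with respect to `p`. -/
def pstar (p : Ultrafilter ℝ) (B : Set ℝ) : Set ℝ := {a | a ∈ B ∧ {b | a + b ∈ B} ∈ p}

lemma pstar_mem (p : Ultrafilter ℝ) (hp : uAdd p p = p) {B : Set ℝ} (hB : B ∈ p) :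
    pstar p B ∈ p := by
  have h1 : B ∈ uAdd p p := by rw [hp]; exact hB
  rw [mem_uAdd] at h1
  exact Filter.inter_mem hB h1

lemma pstar_shift (p : Ultrafilter ℝ) (hp : uAdd p p = p) {B : Set ℝ} {a : ℝ}
    (ha : a ∈ pstar p B) : {b | a + b ∈ pstar p B} ∈ p := by
  obtain ⟨haB, hshift⟩ := ha
  have h2 : {b | a + b ∈ B} ∈ uAdd p p := by rw [hp]; exact hshift
  rw [mem_uAdd] at h2
  have hsub : {b | {y : ℝ | b + y ∈ {c | a + c ∈ B}} ∈ p} ∩ {b | a + b ∈ B}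
      ⊆ {b | a + b ∈ pstar p B} := by
    rintro b ⟨h1, h2⟩
    refine ⟨h2, ?_⟩
    have he : {y : ℝ | b + y ∈ {c | a + c ∈ B}} = {c | (a + b) + c ∈ B} := by
      ext c; simp only [Set.mem_setOf_eq, add_assoc]
    show {c | (a + b) + c ∈ B} ∈ p
    rw [← he]
    exact h1
  exact Filter.mem_of_superset (Filter.inter_mem h2 hshift) hsub

/-- Invariant for the inductive construction. -/
def GoodSet (p : Ultrafilter ℝ) (A C : Set ℝ) : Prop :=
  C ∈ p ∧ C ⊆ A ∧ ∀ a ∈ C, {b | a + b ∈ C} ∈ p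

lemma goodSet_pstar (p : Ultrafilter ℝ) (hp : uAdd p p = p) {A : Set ℝ} (hA : A ∈ p) :
    GoodSet p A (pstar p A) :=
  ⟨pstar_mem p hp hA, fun _ h => h.1, fun _ ha => pstar_shift p hp ha⟩

lemma goodSet_step (p : Ultrafilter ℝ) {A C : Set ℝ} (hC : GoodSet p A C) {x : ℝ} (hx : x ∈ C) :
    GoodSet p A (C ∩ {b | x + b ∈ C}) := by
  obtain ⟨hCp, hCA, hCs⟩ := hC
  refine ⟨Filter.inter_mem hCp (hCs x hx), fun a ha => hCA ha.1, ?_⟩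
  rintro a ⟨haC, haxC⟩
  have h1 : {b | a + b ∈ C} ∈ p := hCs a haC
  have h2 : {b | (x + a) + b ∈ C} ∈ p := hCs _ haxC
  have hsub : {b | a + b ∈ C} ∩ {b | (x + a) + b ∈ C} ⊆ {b | a + b ∈ C ∩ {b | x + b ∈ C}} := by
    rintro b ⟨hb1, hb2⟩
    refine ⟨hb1, ?_⟩
    show x + (a + b) ∈ C
    rwa [← add_assoc]
  exact Filter.mem_of_superset (Filter.inter_mem h1 h2) hsub

/-- Small elements of `S`. -/
def smallS (S : Set ℝ) (ε : ℝ) : Set ℝ := {x | x ∈ S ∧ x < ε}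

open Classical in
/-- pick an element of `C ∩ smallS S ((1/2)^(n+1))` if possible. -/
noncomputable def pickEl (S : Set ℝ) (C : Set ℝ) (n : ℕ) : ℝ :=
  if h : (C ∩ smallS S ((1/2:ℝ)^(n+1))).Nonempty then h.choose else 0

/-- The decreasing sequence of sets. -/
noncomputable def Cseq (S : Set ℝ) (p : Ultrafilter ℝ) (A : Set ℝ) : ℕ → Set ℝ
  | 0 => pstar p A
  | n + 1 => Cseq S p A n ∩ {b | pickEl S (Cseq S p A n) n + b ∈ Cseq S p A n}

lemma pickEl_mem {S : Set ℝ} {p : Ultrafilter ℝ} (hz : p ∈ zeroPlus S) {C : Set ℝ}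
    (hC : C ∈ p) (n : ℕ) : pickEl S C n ∈ C ∩ smallS S ((1/2:ℝ)^(n+1)) := by
  have hε : (0:ℝ) < (1/2:ℝ)^(n+1) := by positivity
  have hs : smallS S ((1/2:ℝ)^(n+1)) ∈ p := hz _ hε
  have hne : (C ∩ smallS S ((1/2:ℝ)^(n+1))).Nonempty :=
    Ultrafilter.nonempty_of_mem (Filter.inter_mem hC hs)
  rw [pickEl, dif_pos hne]
  exact hne.choose_spec

lemma Cseq_good {S A : Set ℝ} {p : Ultrafilter ℝ} (hp : uAdd p p = p) (hz : p ∈ zeroPlus S)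
    (hA : A ∈ p) : ∀ n, GoodSet p A (Cseq S p A n) := by
  intro n
  induction n with
  | zero => exact goodSet_pstar p hp hA
  | succ n ih => exact goodSet_step p ih (pickEl_mem hz ih.1 n).1

lemma Cseq_anti {S A : Set ℝ} {p : Ultrafilter ℝ} : ∀ {m n : ℕ}, m ≤ n →
    Cseq S p A n ⊆ Cseq S p A m := by
  intro m n h
  induction n with
  | zero => rw [Nat.le_zero.mp h]
  | succ n ih =>
    rcases Nat.lt_or_ge m (n+1) with h' | h'
    · exact Set.Subset.trans Set.inter_subset_left (ih (Nat.lt_succ_iff.mp h'))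
    · rw [Nat.le_antisymm h h']

theorem backward_dir (S : Set ℝ) (hS : IsDenseSubsemigroup S) (A : Set ℝ)
    (p : Ultrafilter ℝ) (hp : uAdd p p = p) (hz : p ∈ zeroPlus S) (hAp : A ∈ p) :
    IPNearZero S A := by
  set x : ℕ → ℝ := fun n => pickEl S (Cseq S p A n) n with hxdef
  have hgood : ∀ n, GoodSet p A (Cseq S p A n) := Cseq_good hp hz hAp
  have hxmem : ∀ n : ℕ, x n ∈ Cseq S p A n ∩ smallS S ((1/2:ℝ)^(n+1)) :=
    fun n => pickEl_mem hz (hgood n).1 n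
  have hxS : ∀ n, x n ∈ S := fun n => (hxmem n).2.1
  have hxsmall : ∀ n, x n < (1/2:ℝ)^(n+1) := fun n => (hxmem n).2.2
  have hxpos : ∀ n, 0 < x n := fun n => hS.1 _ (hxS n)
  have key : ∀ (F : Finset ℕ) (hF : F.Nonempty), (∑ m ∈ F, x m) ∈ Cseq S p A (F.min' hF) := by
    intro F
    induction F using Finset.strongInduction with
    | _ F ih =>
      intro hF
      have hmF : F.min' hF ∈ F := F.min'_mem hF
      rcases (F.erase (F.min' hF)).eq_empty_or_nonempty with he | hne
      · have hsing : F = {F.min' hF} := by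
          apply Finset.eq_singleton_iff_unique_mem.mpr
          refine ⟨hmF, fun y hy => ?_⟩
          by_contra hy'
          exact (Finset.ne_empty_of_mem (Finset.mem_erase.mpr ⟨hy', hy⟩)) he
        have hsum : ∑ m ∈ F, x m = x (F.min' hF) := by
          conv_lhs => rw [hsing]
          exact Finset.sum_singleton _ _
        rw [hsum]
        exact (hxmem (F.min' hF)).1
      · have hsum : x (F.min' hF) + ∑ k ∈ F.erase (F.min' hF), x k = ∑ k ∈ F, x k :=
          Finset.add_sum_erase _ _ hmF
        have ihe := ih (F.erase (F.min' hF)) (Finset.erase_ssubset hmF) hne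
        have hmin : F.min' hF + 1 ≤ (F.erase (F.min' hF)).min' hne := by
          have h1 : (F.erase (F.min' hF)).min' hne ∈ F.erase (F.min' hF) := Finset.min'_mem _ _
          have h2 : (F.erase (F.min' hF)).min' hne ≠ F.min' hF := (Finset.mem_erase.mp h1).1
          have h3 : F.min' hF ≤ (F.erase (F.min' hF)).min' hne :=
            F.min'_le _ (Finset.mem_erase.mp h1).2
          omega
        have hsub : ∑ k ∈ F.erase (F.min' hF), x k ∈ Cseq S p A (F.min' hF + 1) :=
          Cseq_anti hmin ihe
        rw [← hsum]
        exact hsub.2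
  refine ⟨x, hxS, ?_, ?_⟩
  · apply Summable.of_nonneg_of_le (fun n => (hxpos n).le) (fun n => (hxsmall n).le)
    have hg : Summable (fun n : ℕ => (1/2:ℝ)^n) :=
      summable_geometric_of_lt_one (by norm_num) (by norm_num)
    have h2 := hg.mul_left (1/2:ℝ)
    apply h2.congr
    intro n
    rw [pow_succ, mul_comm ((1/2:ℝ)^n)]
  · intro F hF
    exact (hgood (F.min' hF)).2.1 (key F hF)

/-- finite sums of `x` with indices at least `n`. -/
def FSg (x : ℕ → ℝ) (n : ℕ) : Set ℝ :=
  {a | ∃ F : Finset ℕ, F.Nonempty ∧ (∀ m ∈ F, n ≤ m) ∧ ∑ m ∈ F, x m = a}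

lemma FSg_anti (x : ℕ → ℝ) {m n : ℕ} (h : m ≤ n) : FSg x n ⊆ FSg x m := by
  rintro a ⟨F, hF, hFn, rfl⟩
  exact ⟨F, hF, fun k hk => le_trans h (hFn k hk), rfl⟩

lemma FSg_shift (x : ℕ → ℝ) {n : ℕ} {a : ℝ} (ha : a ∈ FSg x n) :
    ∃ N, ∀ b ∈ FSg x N, a + b ∈ FSg x n := by
  obtain ⟨F, hF, hFn, rfl⟩ := ha
  refine ⟨F.max' hF + 1, ?_⟩
  rintro b ⟨G, hG, hGn, rfl⟩
  have hdisj : Disjoint F G := by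
    rw [Finset.disjoint_left]
    intro k hkF hkG
    have h1 : k ≤ F.max' hF := F.le_max' k hkF
    have h2 : F.max' hF + 1 ≤ k := hGn k hkG
    omega
  refine ⟨F ∪ G, hF.mono Finset.subset_union_left, ?_, ?_⟩
  · intro k hk
    rcases Finset.mem_union.mp hk with h | h
    · exact hFn k h
    · have h1 : F.max' hF + 1 ≤ k := hGn k h
      have h2 : n ≤ F.max' hF := hFn _ (F.max'_mem hF)
      omega
  · rw [Finset.sum_union hdisj]

lemma FSg_subset_S {S : Set ℝ} (hS : IsDenseSubsemigroup S) {x : ℕ → ℝ} (hxS : ∀ n, x n ∈ S)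
    (n : ℕ) : FSg x n ⊆ S := by
  have hsum : ∀ F : Finset ℕ, F.Nonempty → (∑ m ∈ F, x m) ∈ S := by
    intro F
    induction F using Finset.induction_on with
    | empty => intro h; simp at h
    | @insert a s ha ih =>
      intro _
      rcases s.eq_empty_or_nonempty with rfl | hs
      · simpa using hxS a
      · rw [Finset.sum_insert ha]
        exact hS.2.2 _ (hxS a) _ (ih hs)
  rintro a ⟨F, hF, hFn, rfl⟩
  exact hsum F hF

theorem forward_dir (S : Set ℝ) (hS : IsDenseSubsemigroup S) (A : Set ℝ)
    (h : IPNearZero S A) :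
    ∃ p : Ultrafilter ℝ, uAdd p p = p ∧ p ∈ zeroPlus S ∧ A ∈ p := by
  obtain ⟨x, hxS, hxsum, hxA⟩ := h
  have hx0 : Filter.Tendsto x Filter.atTop (nhds 0) := hxsum.tendsto_atTop_zero
  -- small elements exist in every tail of FSg
  have hsmall : ∀ (n : ℕ) (ε : ℝ), 0 < ε → ∃ a, a ∈ FSg x n ∧ a ∈ S ∧ a < ε := by
    intro n ε hε
    have hev : ∀ᶠ m in Filter.atTop, x m < ε := Filter.Tendsto.eventually_lt_const hε hx0
    obtain ⟨m, hm⟩ := (hev.and (Filter.eventually_ge_atTop n)).exists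
    exact ⟨x m, ⟨{m}, Finset.singleton_nonempty m, by simpa using hm.2, by simp⟩, hxS m, hm.1⟩
  -- the sequence of sets D n
  set D : ℕ → Set ℝ := fun n => FSg x n ∩ smallS S (1/(n+1:ℝ)) with hD
  have hDne : ∀ n, (D n).Nonempty := by
    intro n
    obtain ⟨a, ha, haS, haε⟩ := hsmall n (1/(n+1:ℝ)) (by positivity)
    exact ⟨a, ha, haS, haε⟩
  have hDanti : ∀ n, D (n+1) ⊆ D n := by
    intro n
    apply Set.inter_subset_inter (FSg_anti x (Nat.le_succ n))
    rintro a ⟨haS, haε⟩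
    refine ⟨haS, lt_of_lt_of_le haε ?_⟩
    apply one_div_le_one_div_of_le (by positivity)
    push_cast; linarith
  set T : Set (Ultrafilter ℝ) := ⋂ n, {U : Ultrafilter ℝ | D n ∈ U} with hT
  -- membership in T gives zeroPlus and FSg tails
  have hTzero : ∀ U ∈ T, U ∈ zeroPlus S := by
    intro U hU ε hε
    obtain ⟨n, hn⟩ := exists_nat_one_div_lt hε
    have h1 : D n ∈ U := Set.mem_iInter.mp hU n
    apply Filter.mem_of_superset h1
    rintro a ⟨_, haS, haε⟩
    exact ⟨haS, lt_trans haε hn⟩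
  have hTFS : ∀ U ∈ T, ∀ n, FSg x n ∈ U := by
    intro U hU n
    exact Filter.mem_of_superset (Set.mem_iInter.mp hU n) Set.inter_subset_left
  -- T is closed under addition
  have hTadd : ∀ U ∈ T, ∀ V ∈ T, U + V ∈ T := by
    intro U hU V hV
    rw [Set.mem_iInter]
    intro n
    have hFS : FSg x n ∈ U + V := by
      rw [← uAdd_eq, mem_uAdd]
      apply Filter.mem_of_superset (hTFS U hU n)
      intro a ha
      obtain ⟨N, hN⟩ := FSg_shift x ha
      exact Filter.mem_of_superset (hTFS V hV N) hN
    have hB : smallS S (1/(n+1:ℝ)) ∈ U + V := by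
      rw [← uAdd_eq, mem_uAdd]
      have hhalf : (0:ℝ) < 1/(n+1:ℝ)/2 := by positivity
      apply Filter.mem_of_superset (hTzero U hU _ hhalf)
      rintro a ⟨haS, haε⟩
      apply Filter.mem_of_superset (hTzero V hV _ hhalf)
      rintro b ⟨hbS, hbε⟩
      exact ⟨hS.2.2 _ haS _ hbS, by linarith⟩
    exact Filter.inter_mem hFS hB
  -- T is nonempty and compact
  have hTclosed : IsClosed T := isClosed_iInter fun n => ultrafilter_isClosed_basic _
  have hTne : T.Nonempty := by
    apply IsCompact.nonempty_iInter_of_sequence_nonempty_isCompact_isClosed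
    · intro n U hU
      exact Filter.mem_of_superset hU (hDanti n)
    · intro n
      obtain ⟨a, ha⟩ := hDne n
      exact ⟨pure a, Ultrafilter.mem_pure.mpr ha⟩
    · exact (ultrafilter_isClosed_basic _).isCompact
    · intro n; exact ultrafilter_isClosed_basic _
  obtain ⟨U, hUT, hUidem⟩ := exists_idempotent_in_compact_add_subsemigroup
    Ultrafilter.continuous_add_left T hTne hTclosed.isCompact hTadd
  refine ⟨U, by rw [uAdd_eq]; exact hUidem, hTzero U hUT, ?_⟩
  apply Filter.mem_of_superset (hTFS U hUT 0)
  rintro a ⟨F, hF, _, rfl⟩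
  exact hxA F hF

/-- Theorem 2.6 (Hindman–Leader). -/
theorem IPNearZero_iff_mem_idempotent (S : Set ℝ) (hS : IsDenseSubsemigroup S)
    (A : Set ℝ) (hA : A ⊆ S) :
    IPNearZero S A ↔
      ∃ p : Ultrafilter ℝ, uAdd p p = p ∧ p ∈ zeroPlus S ∧ A ∈ p := by
  constructor
  · exact forward_dir S hS A
  · rintro ⟨p, hp, hz, hAp⟩
    exact backward_dir S hS A p hp hz hAp
end

section
/- For every finite coloring of the positive natural numbers, there exist a, b ∈ ℕ with a, b ≥ 1 such that the four numbers a, b, a·b and b·(a+1) all receive the same color. (Theorem 3.5, Goswami.) -/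
open Filter

attribute [local instance] Ultrafilter.add Ultrafilter.addSemigroup

namespace GoswamiAux

/-- The set of positive multiples of `u`. -/
def D (u : ℕ) : Set ℕ := {n | 0 < n ∧ u ∣ n}

/-- An ultrafilter is divisible if it contains all sets of positive multiples. -/
def IsDiv (q : Ultrafilter ℕ) : Prop := ∀ u : ℕ, 0 < u → D u ∈ q

/-- Division of an ultrafilter by a natural number (pushforward along `· / P`). -/
def qdiv (q : Ultrafilter ℕ) (P : ℕ) : Ultrafilter ℕ := q.map (· / P)

theorem eventually_qdiv {q : Ultrafilter ℕ} {P : ℕ} {p : ℕ → Prop} :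
    (∀ᶠ n in ↑(qdiv q P), p n) ↔ ∀ᶠ m in ↑q, p (m / P) := by
  rw [qdiv, Ultrafilter.coe_map, Filter.eventually_map]

theorem qdiv_qdiv (q : Ultrafilter ℕ) (P n : ℕ) :
    qdiv (qdiv q P) n = qdiv q (P * n) := by
  rw [qdiv, qdiv, qdiv, Ultrafilter.map_map]
  congr 1
  funext m
  exact Nat.div_div_eq_div_mul m P n

theorem isDiv_qdiv {q : Ultrafilter ℕ} (hq : IsDiv q) {P : ℕ} (hP : 0 < P) :
    IsDiv (qdiv q P) := by
  intro u hu
  have h : D (P * u) ∈ q := hq _ (Nat.mul_pos hP hu)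
  rw [qdiv, Ultrafilter.mem_map]
  refine Filter.mem_of_superset h ?_
  rintro m ⟨hm, k, rfl⟩
  have hdiv : P * u * k / P = u * k := by
    rw [mul_assoc]
    exact Nat.mul_div_cancel_left (u * k) hP
  refine ⟨?_, ?_⟩
  · simp only [Set.mem_setOf_eq] at *
    rw [hdiv]
    rcases Nat.eq_zero_or_pos (u * k) with h0 | h0
    · exfalso; rw [mul_assoc, h0, mul_zero] at hm; exact lt_irrefl 0 hm
    · exact h0
  · simp only [Set.mem_setOf_eq]
    rw [hdiv]
    exact Dvd.intro k rfl

theorem idem_qdiv {q : Ultrafilter ℕ} (hq : IsDiv q) (hidem : q + q = q) {P : ℕ} (hP : 0 < P) :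
    qdiv q P + qdiv q P = qdiv q P := by
  apply Ultrafilter.coe_inj.mp
  apply Filter.ext'
  intro p
  rw [Ultrafilter.eventually_add]
  simp only [eventually_qdiv]
  have key : (∀ᶠ x in ↑q, ∀ᶠ y in ↑q, p ((x + y) / P)) ↔ ∀ᶠ x in ↑q, p (x / P) := by
    constructor
    · intro h
      have h2 : ∀ᶠ n in ↑(q + q), p (n / P) := by
        rw [Ultrafilter.eventually_add]; exact h
      rwa [hidem] at h2
    · intro h
      have h2 : ∀ᶠ n in ↑(q + q), p (n / P) := by rw [hidem]; exact h
      rwa [Ultrafilter.eventually_add] at h2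
  rw [← key]
  apply eventually_congr
  filter_upwards [hq P hP] with x hx
  apply eventually_congr
  filter_upwards [hq P hP] with y hy
  obtain ⟨a, rfl⟩ := hx.2
  obtain ⟨b, rfl⟩ := hy.2
  rw [Nat.mul_div_cancel_left a hP, Nat.mul_div_cancel_left b hP, ← Nat.mul_add,
    Nat.mul_div_cancel_left (a + b) hP]

variable {κ : Type*} [Finite κ] (c : ℕ → κ)

/-- The color of an ultrafilter. -/
noncomputable def gam (q : Ultrafilter ℕ) : κ :=
  (Ultrafilter.eq_pure_of_finite (q.map c)).choose

theorem gam_spec (q : Ultrafilter ℕ) : ∀ᶠ n in ↑q, c n = gam c q := by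
  have h := (Ultrafilter.eq_pure_of_finite (q.map c)).choose_spec
  have h2 : {gam c q} ∈ q.map c := by
    rw [h]; exact Ultrafilter.mem_pure.mpr rfl
  rw [Ultrafilter.mem_map] at h2
  filter_upwards [h2] with n hn
  exact hn

/-- The key structured set associated to an ultrafilter. -/
def Gset (q : Ultrafilter ℕ) : Set ℕ :=
  {m | 0 < m ∧ c m = gam c q ∧ ∀ᶠ k in ↑q, c (m + k) = gam c q}

theorem Gset_mem {q : Ultrafilter ℕ} (hdiv : IsDiv q) (hidem : q + q = q) :
    Gset c q ∈ q := by
  have key : ∀ p : ℕ → Prop, (∀ᶠ n in ↑q, p n) → ∀ᶠ m in ↑q, ∀ᶠ k in ↑q, p (m + k) := by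
    intro p hp
    have h2 : ∀ᶠ n in ↑(q + q), p n := by rw [hidem]; exact hp
    rwa [Ultrafilter.eventually_add] at h2
  have h1 : ∀ᶠ n in ↑q, 0 < n := by
    filter_upwards [hdiv 1 one_pos] with n hn; exact hn.1
  have h2 := gam_spec c q
  have h3 := key _ (gam_spec c q)
  have h4 : ∀ᶠ n in ↑q, n ∈ Gset c q := by
    filter_upwards [h1, h2, h3] with m p1 p2 p3
    exact ⟨p1, p2, p3⟩
  rwa [Filter.eventually_iff, Set.setOf_mem_eq, Ultrafilter.mem_coe] at h4

theorem qdiv_mul_mem {q : Ultrafilter ℕ} (hdiv : IsDiv q) {P : ℕ} (hP : 0 < P)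
    {s : Set ℕ} (hs : s ∈ q) : ∀ᶠ n in ↑(qdiv q P), P * n ∈ s := by
  rw [eventually_qdiv]
  filter_upwards [hs, hdiv P hP] with m hm hDm
  rwa [Nat.mul_div_cancel' hDm.2]

/-- The invariant carried through the chain construction. -/
def Inv (q₀ : Ultrafilter ℕ) (f : ℕ → ℕ) (ℓ : ℕ) : Prop :=
  (∀ i, i ≤ ℓ → 0 < f i) ∧ (∀ i j, i ≤ j → j ≤ ℓ → f i ∣ f j) ∧
    (∀ i j, i < j → j ≤ ℓ → f j / f i ∈ Gset c (qdiv q₀ (f i)))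

theorem chain (q₀ : Ultrafilter ℕ) (hdiv : IsDiv q₀) (hidem : q₀ + q₀ = q₀) (ℓ : ℕ) :
    ∃ f : ℕ → ℕ, Inv c q₀ f ℓ := by
  induction ℓ with
  | zero =>
      refine ⟨fun _ => 1, fun i _ => one_pos, fun i j _ _ => dvd_refl 1, fun i j hij hj => ?_⟩
      omega
  | succ ℓ ih =>
      obtain ⟨f, hpos, hdvd, hG⟩ := ih
      -- the ultrafilters along the chain are divisible idempotents
      have hQ : ∀ i, i ≤ ℓ → IsDiv (qdiv q₀ (f i)) ∧
          (qdiv q₀ (f i) + qdiv q₀ (f i) = qdiv q₀ (f i)) :=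
        fun i hi => ⟨isDiv_qdiv hdiv (hpos i hi), idem_qdiv hdiv hidem (hpos i hi)⟩
      -- each steering set is large in qdiv q₀ (f ℓ)
      have hT : ∀ i, i ≤ ℓ →
          {n | (f ℓ / f i) * n ∈ Gset c (qdiv q₀ (f i))} ∈ qdiv q₀ (f ℓ) := by
        intro i hi
        have hd : f i ∣ f ℓ := hdvd i ℓ hi le_rfl
        have h1 : 0 < f ℓ / f i :=
          Nat.div_pos (Nat.le_of_dvd (hpos ℓ le_rfl) hd) (hpos i hi)
        have h2 := qdiv_mul_mem (hQ i hi).1 h1 (Gset_mem c (hQ i hi).1 (hQ i hi).2)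
        rw [qdiv_qdiv, Nat.mul_div_cancel' hd] at h2
        rwa [Filter.eventually_iff, Ultrafilter.mem_coe] at h2
      -- intersect all steering sets plus positivity
      have hTT : ((⋂ i ∈ Finset.range (ℓ + 1),
          {n | (f ℓ / f i) * n ∈ Gset c (qdiv q₀ (f i))}) ∩ D 1) ∈ qdiv q₀ (f ℓ) := by
        refine Filter.inter_mem ?_ (isDiv_qdiv hdiv (hpos ℓ le_rfl) 1 one_pos)
        refine (Filter.biInter_finset_mem _).mpr ?_
        intro i hi
        exact hT i (Nat.lt_succ_iff.mp (Finset.mem_range.mp hi))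
      obtain ⟨n, hn⟩ := Ultrafilter.nonempty_of_mem hTT
      obtain ⟨hnT, hnpos, -⟩ := hn
      refine ⟨Function.update f (ℓ + 1) (f ℓ * n), ?_, ?_, ?_⟩
      · intro i hi
        rcases Nat.lt_succ_iff_lt_or_eq.mp (Nat.lt_succ_of_le hi) with h | rfl
        · rw [Function.update_of_ne (by omega)]
          exact hpos i (by omega)
        · rw [Function.update_self]
          exact Nat.mul_pos (hpos ℓ le_rfl) hnpos
      · intro i j hij hj
        rcases Nat.lt_succ_iff_lt_or_eq.mp (Nat.lt_succ_of_le hj) with h | rfl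
        · rw [Function.update_of_ne (by omega), Function.update_of_ne (by omega)]
          exact hdvd i j hij (by omega)
        · rcases Nat.lt_succ_iff_lt_or_eq.mp (Nat.lt_succ_of_le hij) with h2 | rfl
          · rw [Function.update_of_ne (by omega), Function.update_self]
            exact dvd_mul_of_dvd_left (hdvd i ℓ (by omega) le_rfl) n
          · exact dvd_refl _
      · intro i j hij hj
        rcases Nat.lt_succ_iff_lt_or_eq.mp (Nat.lt_succ_of_le hj) with h | rfl
        · rw [Function.update_of_ne (by omega), Function.update_of_ne (by omega)]
          exact hG i j hij (by omega)
        · have hi : i ≤ ℓ := by omega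
          rw [Function.update_of_ne (by omega), Function.update_self]
          have hd : f i ∣ f ℓ := hdvd i ℓ hi le_rfl
          have harith : f ℓ * n / f i = (f ℓ / f i) * n := by
            rw [mul_comm (f ℓ) n, Nat.mul_div_assoc n hd, mul_comm]
          rw [harith]
          have := Set.mem_iInter₂.mp hnT i (Finset.mem_range.mpr (by omega))
          exact this

end GoswamiAux

open GoswamiAux in
/-- Theorem 3.5 (Goswami): for any finite coloring of the positive natural numbers,
the set `{a, b, a·b, b·(a+1)}` is monochromatic for some `a, b ≥ 1`. -/
theorem goswami (κ : Type*) [Finite κ] (c : ℕ → κ) :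
    ∃ a b : ℕ, 1 ≤ a ∧ 1 ≤ b ∧
      c a = c b ∧ c a = c (a * b) ∧ c a = c (b * (a + 1)) := by
  classical
  cases nonempty_fintype κ
  -- Step 1: a divisible additive idempotent ultrafilter exists
  have hne : Set.Nonempty {q : Ultrafilter ℕ | IsDiv q} := by
    obtain ⟨U, hU⟩ := Ultrafilter.exists_le (Filter.cofinite : Filter ℕ)
    refine ⟨U.map (fun n => Nat.factorial n), ?_⟩
    intro u hu
    rw [Ultrafilter.mem_map]
    have hcof : {n : ℕ | u ≤ n} ∈ (Filter.cofinite : Filter ℕ) := by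
      rw [Filter.mem_cofinite]
      have : {n : ℕ | u ≤ n}ᶜ = {n | n < u} := by ext n; simp [not_le]
      rw [this]
      exact Set.finite_lt_nat u
    have := hU hcof
    refine Filter.mem_of_superset this ?_
    intro n hn
    exact ⟨Nat.factorial_pos n, Nat.dvd_factorial hu hn⟩
  have hclosed : IsClosed {q : Ultrafilter ℕ | IsDiv q} := by
    have heq : {q : Ultrafilter ℕ | IsDiv q} =
        ⋂ u ∈ {u : ℕ | 0 < u}, {q : Ultrafilter ℕ | D u ∈ q} := by
      ext q; simp [IsDiv]
    rw [heq]
    exact isClosed_biInter fun u _ => ultrafilter_isClosed_basic _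
  have hadd : ∀ x ∈ {q : Ultrafilter ℕ | IsDiv q}, ∀ y ∈ {q : Ultrafilter ℕ | IsDiv q},
      x + y ∈ {q : Ultrafilter ℕ | IsDiv q} := by
    intro x hx y hy u hu
    have hev : ∀ᶠ m in ↑(x + y), m ∈ D u := by
      rw [Ultrafilter.eventually_add]
      filter_upwards [hx u hu] with m hm
      filter_upwards [hy u hu] with k hk
      exact ⟨Nat.add_pos_left hm.1 k, Nat.dvd_add hm.2 hk.2⟩
    rwa [Filter.eventually_iff, Set.setOf_mem_eq, Ultrafilter.mem_coe] at hev
  obtain ⟨q₀, hq₀mem, hq₀idem⟩ :=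
    exists_idempotent_in_compact_add_subsemigroup Ultrafilter.continuous_add_left
      {q : Ultrafilter ℕ | IsDiv q} hne hclosed.isCompact hadd
  have hq₀div : IsDiv q₀ := hq₀mem
  -- Step 2: the chain
  set r := Fintype.card κ with hr
  obtain ⟨f, hpos, hdvd, hG⟩ := chain c q₀ hq₀div hq₀idem r
  -- Step 3: pigeonhole
  obtain ⟨i, j, hij, hgam⟩ :=
    Fintype.exists_ne_map_eq_of_card_lt
      (fun i : Fin (r + 1) => gam c (qdiv q₀ (f (i : ℕ))))
      (by simp [hr])
  -- wlog i < j
  wlog hlt : (i : ℕ) < (j : ℕ) generalizing i j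
  · exact this j i (Ne.symm hij) hgam.symm
      (lt_of_le_of_ne (Nat.le_of_not_lt hlt) (by simpa [Fin.val_eq_val] using Ne.symm hij))
  set I := (i : ℕ)
  set J := (j : ℕ)
  have hJle : J ≤ r := Nat.lt_succ_iff.mp j.isLt
  have hIle : I ≤ r := Nat.lt_succ_iff.mp i.isLt
  set qI := qdiv q₀ (f I) with hqI
  set M := f J / f I with hM
  have hMG : M ∈ Gset c qI := hG I J hlt hJle
  obtain ⟨hMpos, hMcol, hMq⟩ := hMG
  have hfd : f I ∣ f J := hdvd I J hlt.le hJle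
  have hqJ : qdiv qI M = qdiv q₀ (f J) := by
    rw [hqI, hM, qdiv_qdiv, Nat.mul_div_cancel' hfd]
  have hqIdiv : IsDiv qI := isDiv_qdiv hq₀div (hpos I hIle)
  have hgam' : gam c (qdiv qI M) = gam c qI := by
    rw [hqJ]; exact hgam.symm
  -- the four large sets in qI
  have e1 : ∀ᶠ x in ↑qI, c x = gam c qI := gam_spec c qI
  have e2 : ∀ᶠ x in ↑qI, c (M + x) = gam c qI := hMq
  have e3 : ∀ᶠ x in ↑qI, c (x / M) = gam c qI := by
    have h := gam_spec c (qdiv qI M)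
    rw [hgam', eventually_qdiv] at h
    exact h
  have e4 : ∀ᶠ x in ↑qI, x ∈ D M := by
    have := hqIdiv M hMpos
    rwa [← Ultrafilter.mem_coe, ← Filter.eventually_mem_set] at this
  obtain ⟨x₂, hx1, hx2, hx3, hx4⟩ := (e1.and (e2.and (e3.and e4))).exists
  refine ⟨x₂ / M, M, ?_, ?_, ?_, ?_, ?_⟩
  · exact Nat.div_pos (Nat.le_of_dvd hx4.1 hx4.2) hMpos
  · exact hMpos
  · exact hx3.trans hMcol.symm
  · rw [Nat.div_mul_cancel hx4.2]
    exact hx3.trans hx1.symm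
  · have harith : M * (x₂ / M + 1) = M + x₂ := by
      rw [Nat.mul_add, Nat.mul_one, Nat.mul_div_cancel' hx4.2, Nat.add_comm]
    rw [harith]
    exact hx3.trans hx2.symm
end
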